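/- arXiv:2404.14939 — 8 statements merged into one kernel-verified Lean document; each statement's English description precedes it below -/
import Mathlib

section
/- Let (Ω,F,μ) be a measure space, X a dual Banach space whose closed unit ball is weak*-sequentially compact, p ∈ [1,∞), f ∈ L^p(Ω,μ;X), and A ∈ F with 0 < μ(A) < ∞. Then there exists a p-th mean of f in A, i.e., a point x ∈ X such that ∫_A ‖f(ω) - x‖^p dμ = inf_{y∈X} ∫_A ‖f(ω) - y‖^p dμ. -/
open MeasureTheory Set Filter Topology
open scoped ENNReal NNReal

theorem exists_p_mean_of_dual_wstar_seq_compact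
    {Ω Y : Type*} [MeasurableSpace Ω] [NormedAddCommGroup Y] [NormedSpace ℝ Y]
    [CompleteSpace Y] (μ : Measure Ω) (p : ℝ) (hp : 1 ≤ p)
    -- the unit ball of X = Y* is weak*-sequentially compact
    (hwsc : ∀ x : ℕ → (Y →L[ℝ] ℝ), (∀ n, ‖x n‖ ≤ 1) →
      ∃ φ : ℕ → ℕ, StrictMono φ ∧ ∃ x₀ : Y →L[ℝ] ℝ,
        ∀ y : Y, Tendsto (fun n => x (φ n) y) atTop (𝓝 (x₀ y)))
    (f : Ω → (Y →L[ℝ] ℝ)) (hf : MemLp f (ENNReal.ofReal p) μ)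
    (A : Set Ω) (hA : MeasurableSet A) (hApos : 0 < μ A) (hAfin : μ A < ⊤) :
    ∃ x : Y →L[ℝ] ℝ, ∀ y : Y →L[ℝ] ℝ,
      (∫ ω in A, ‖f ω - x‖ ^ p ∂μ) ≤ ∫ ω in A, ‖f ω - y‖ ^ p ∂μ := by
  have hp0 : (0:ℝ) < p := one_pos.trans_le hp
  set p' : ℝ≥0∞ := ENNReal.ofReal p with hp'def
  have hp'0 : p' ≠ 0 := (ENNReal.ofReal_pos.mpr hp0).ne'
  have hp'top : p' ≠ ⊤ := ENNReal.ofReal_ne_top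
  have hp'1 : 1 ≤ p' := ENNReal.one_le_ofReal.mpr hp
  have hpr : p'.toReal = p := ENNReal.toReal_ofReal hp0.le
  haveI : IsFiniteMeasure (μ.restrict A) := ⟨by simpa [Measure.restrict_apply_univ] using hAfin⟩
  have hν0 : μ.restrict A ≠ 0 := by
    intro h0
    have h1 : μ.restrict A univ = μ A := Measure.restrict_apply_univ A
    rw [h0] at h1
    simp at h1
    exact hApos.ne' h1.symm
  have hfν : AEStronglyMeasurable f (μ.restrict A) := (hf.restrict A).aestronglyMeasurable
  have hptw : ∀ v : Y →L[ℝ] ℝ, ((‖v‖₊ : ℝ≥0∞)) ^ p = ENNReal.ofReal (‖v‖ ^ p) := fun v => by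
    rw [← enorm_eq_nnnorm, ← ofReal_norm, ENNReal.ofReal_rpow_of_nonneg (norm_nonneg v) hp0.le]
  set L : (Y →L[ℝ] ℝ) → ℝ≥0∞ :=
    fun x => ∫⁻ ω in A, ENNReal.ofReal (‖f ω - x‖ ^ p) ∂μ with hL
  have hcontp : Continuous fun r : ℝ => r ^ p :=
    continuous_id.rpow_const fun _ => Or.inr hp0.le
  have haesm : ∀ x : Y →L[ℝ] ℝ,
      AEStronglyMeasurable (fun ω => ‖f ω - x‖ ^ p) (μ.restrict A) := fun x =>
    hcontp.comp_aestronglyMeasurable (hfν.sub aestronglyMeasurable_const).norm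
  have hmeasL : ∀ x : Y →L[ℝ] ℝ,
      AEMeasurable (fun ω => ENNReal.ofReal (‖f ω - x‖ ^ p)) (μ.restrict A) := fun x =>
    ENNReal.measurable_ofReal.comp_aemeasurable (haesm x).aemeasurable
  have hLe : ∀ x : Y →L[ℝ] ℝ,
      eLpNorm (fun ω => f ω - x) p' (μ.restrict A) = (L x) ^ (1/p) := by
    intro x
    rw [eLpNorm_eq_lintegral_rpow_enorm_toReal hp'0 hp'top, hpr, hL]
    congr 1
    exact lintegral_congr fun ω => hptw _
  have hLlt : ∀ x : Y →L[ℝ] ℝ, L x < ⊤ := by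
    intro x
    have h0 := ((hf.restrict A).sub (memLp_const x)).eLpNorm_lt_top
    have h : eLpNorm (fun ω => f ω - x) p' (μ.restrict A) < ⊤ := h0
    rw [hLe x] at h
    exact (ENNReal.rpow_lt_top_iff_of_pos (by positivity)).mp h
  set I := ⨅ y : Y →L[ℝ] ℝ, L y with hI
  have hItop : I < ⊤ := lt_of_le_of_lt (iInf_le _ 0) (hLlt 0)
  have hxseq : ∀ n : ℕ, ∃ x, L x < I + ((n : ℝ≥0∞) + 1)⁻¹ := by
    intro n
    have h : I < I + ((n : ℝ≥0∞) + 1)⁻¹ :=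
      ENNReal.lt_add_right hItop.ne (by simp)
    exact iInf_lt_iff.mp h
  choose x hx using hxseq
  have hxC : ∀ n, L (x n) ≤ I + 1 := by
    intro n
    refine (hx n).le.trans (add_le_add_right ?_ I)
    simp [ENNReal.inv_le_one]
  -- uniform norm bound on the minimizing sequence
  set S := eLpNorm f p' (μ.restrict A) with hS
  have hStop : S < ⊤ := (hf.restrict A).eLpNorm_lt_top
  have hμA0 : (μ A) ^ (1/p) ≠ 0 := (ENNReal.rpow_pos hApos hAfin.ne).ne'
  have hμAtop : (μ A) ^ (1/p) ≠ ⊤ := ENNReal.rpow_ne_top_of_nonneg (by positivity) hAfin.ne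
  set Re := ((I + 1) ^ (1/p) + S) / (μ A) ^ (1/p) with hRe
  have hRetop : Re < ⊤ := by
    refine ENNReal.div_lt_top ?_ hμA0
    exact ENNReal.add_ne_top.mpr
      ⟨ENNReal.rpow_ne_top_of_nonneg (by positivity)
        (ENNReal.add_ne_top.mpr ⟨hItop.ne, ENNReal.one_ne_top⟩), hStop.ne⟩
  have hxRe : ∀ n, (‖x n‖₊ : ℝ≥0∞) ≤ Re := by
    intro n
    rw [hRe, ENNReal.le_div_iff_mul_le (Or.inl hμA0) (Or.inl hμAtop)]
    have hconst : eLpNorm (fun _ : Ω => x n) p' (μ.restrict A)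
        = (‖x n‖₊ : ℝ≥0∞) * (μ A) ^ (1/p) := by
      rw [eLpNorm_const _ hp'0 hν0, hpr, Measure.restrict_apply_univ, enorm_eq_nnnorm]
    have heq : (fun _ : Ω => x n) = (fun ω => x n - f ω) + f := by
      funext ω; simp
    have hneg : (fun ω : Ω => x n - f ω) = -(fun ω : Ω => f ω - x n) := by
      funext ω; simp
    calc (‖x n‖₊ : ℝ≥0∞) * (μ A) ^ (1/p)
        = eLpNorm (fun _ : Ω => x n) p' (μ.restrict A) := hconst.symm
      _ = eLpNorm ((fun ω => x n - f ω) + f) p' (μ.restrict A) := by rw [← heq]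
      _ ≤ eLpNorm (fun ω => x n - f ω) p' (μ.restrict A) + S :=
          eLpNorm_add_le (f := fun ω => x n - f ω) (g := f) (aestronglyMeasurable_const.sub hfν) hfν hp'1
      _ = eLpNorm (fun ω => f ω - x n) p' (μ.restrict A) + S := by rw [hneg, eLpNorm_neg]
      _ = (L (x n)) ^ (1/p) + S := by rw [hLe]
      _ ≤ (I + 1) ^ (1/p) + S :=
          add_le_add_left (ENNReal.rpow_le_rpow (hxC n) (by positivity)) S
  set R : ℝ := Re.toReal + 1 with hRdef
  have hRpos : (0:ℝ) < R := by positivity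
  have hxR : ∀ n, ‖x n‖ ≤ R := by
    intro n
    have h := ENNReal.toReal_mono hRetop.ne (hxRe n)
    simp only [ENNReal.coe_toReal, coe_nnnorm] at h
    rw [hRdef]; linarith
  -- extract weak* convergent subsequence
  have hz : ∀ n, ‖R⁻¹ • x n‖ ≤ 1 := by
    intro n
    calc ‖R⁻¹ • x n‖ ≤ ‖R⁻¹‖ * ‖x n‖ := ContinuousLinearMap.opNorm_smul_le _ _
      _ = R⁻¹ * ‖x n‖ := by rw [norm_inv, Real.norm_eq_abs, abs_of_nonneg hRpos.le]
      _ ≤ R⁻¹ * R := mul_le_mul_of_nonneg_left (hxR n) (inv_nonneg.mpr hRpos.le)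
      _ = 1 := inv_mul_cancel₀ hRpos.ne'
  obtain ⟨φ, hφ, z₀, hz₀⟩ := hwsc (fun n => R⁻¹ • x n) hz
  set x₀ : Y →L[ℝ] ℝ := R • z₀ with hx₀
  have hconv : ∀ y : Y, Tendsto (fun n => (x (φ n)) y) atTop (𝓝 (x₀ y)) := by
    intro y
    have h := (hz₀ y).const_mul R
    have he0 : R * z₀ y = x₀ y := by
      simp [hx₀, ContinuousLinearMap.smul_apply, smul_eq_mul]
    simpa [ContinuousLinearMap.smul_apply, smul_eq_mul, ← mul_assoc,
      mul_inv_cancel₀ hRpos.ne', he0] using h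
  -- pointwise weak* lower semicontinuity of the norm
  have hlsc : ∀ ω, ENNReal.ofReal (‖f ω - x₀‖ ^ p)
      ≤ liminf (fun n => ENNReal.ofReal (‖f ω - x (φ n)‖ ^ p)) atTop := by
    intro ω
    have hev : ∀ b : ℝ, b < ‖f ω - x₀‖ → ∀ᶠ n in atTop, b ≤ ‖f ω - x (φ n)‖ := by
      intro b hb
      rcases le_or_gt b 0 with hb0 | hb0
      · exact Eventually.of_forall fun n => hb0.trans (norm_nonneg _)
      · by_cases hforall : ∀ u : Y, ‖(f ω - x₀) u‖ ≤ b * ‖u‖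
        · exact absurd (ContinuousLinearMap.opNorm_le_bound _ hb0.le hforall) hb.not_ge
        push_neg at hforall
        obtain ⟨u, hu⟩ := hforall
        have hu0 : u ≠ 0 := by
          rintro rfl
          simp at hu
        have hun : (0:ℝ) < ‖u‖ := norm_pos_iff.mpr hu0
        set v : Y := ‖u‖⁻¹ • u with hv
        have hvb : b < ‖(f ω - x₀) v‖ := by
          rw [hv, ContinuousLinearMap.map_smul, smul_eq_mul, Real.norm_eq_abs, abs_mul,
            abs_inv, abs_norm, inv_mul_eq_div, lt_div_iff₀ hun]
          exact hu
        have hvnorm : ‖v‖ ≤ 1 := by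
          rw [hv, norm_smul, norm_inv, norm_norm, inv_mul_cancel₀ hun.ne']
        have htend : Tendsto (fun n => ‖(f ω - x (φ n)) v‖) atTop (𝓝 ‖(f ω - x₀) v‖) := by
          have h1 : Tendsto (fun n => (f ω) v - (x (φ n)) v) atTop (𝓝 ((f ω) v - x₀ v)) :=
            tendsto_const_nhds.sub (hconv v)
          simpa [ContinuousLinearMap.sub_apply] using h1.norm
        filter_upwards [htend.eventually (eventually_gt_nhds hvb)] with n hn
        exact hn.le.trans ((f ω - x (φ n)).unit_le_opNorm v hvnorm)
    rcases eq_or_lt_of_le (norm_nonneg (f ω - x₀)) with hc0 | hc0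
    · rw [← hc0, Real.zero_rpow hp0.ne', ENNReal.ofReal_zero]
      exact zero_le
    · have hcont : Tendsto (fun b : ℝ => ENNReal.ofReal (b ^ p)) (𝓝[<] ‖f ω - x₀‖)
          (𝓝 (ENNReal.ofReal (‖f ω - x₀‖ ^ p))) :=
        ((ENNReal.continuous_ofReal.comp hcontp).tendsto _).mono_left nhdsWithin_le_nhds
      refine le_of_tendsto hcont ?_
      filter_upwards [Ioo_mem_nhdsLT hc0] with b hb
      refine le_liminf_of_le ?_ ?_
      · isBoundedDefault
      · filter_upwards [hev b hb.2] with n hn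
        exact ENNReal.ofReal_le_ofReal (Real.rpow_le_rpow hb.1.le hn hp0.le)
  -- Fatou
  have hFatou : L x₀ ≤ liminf (fun n => L (x (φ n))) atTop := by
    rw [hL]
    calc (∫⁻ ω in A, ENNReal.ofReal (‖f ω - x₀‖ ^ p) ∂μ)
        ≤ ∫⁻ ω in A, liminf (fun n => ENNReal.ofReal (‖f ω - x (φ n)‖ ^ p)) atTop ∂μ :=
          lintegral_mono fun ω => hlsc ω
      _ ≤ liminf (fun n => ∫⁻ ω in A, ENNReal.ofReal (‖f ω - x (φ n)‖ ^ p) ∂μ) atTop :=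
          lintegral_liminf_le' fun n => hmeasL (x (φ n))
  have hlim : liminf (fun n => L (x (φ n))) atTop ≤ I := by
    refine ENNReal.le_of_forall_pos_le_add fun ε hε _ => ?_
    obtain ⟨n₀, hn₀⟩ := ENNReal.exists_inv_nat_lt
      (by exact_mod_cast hε.ne' : ((ε : ℝ≥0∞)) ≠ 0)
    refine liminf_le_of_frequently_le ?_ ?_
    · refine ((eventually_ge_atTop n₀).mono ?_).frequently
      intro n hn
      calc L (x (φ n)) ≤ I + ((φ n : ℝ≥0∞) + 1)⁻¹ := (hx (φ n)).le
        _ ≤ I + ((n₀ : ℝ≥0∞))⁻¹ := by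
            refine add_le_add_right (ENNReal.inv_le_inv' ?_) I
            exact le_trans (by exact_mod_cast hn.trans hφ.le_apply) le_self_add
        _ ≤ I + ε := add_le_add_right hn₀.le I
    · isBoundedDefault
  refine ⟨x₀, fun y => ?_⟩
  have hLI : L x₀ ≤ L y := ((hFatou.trans hlim).trans (iInf_le _ y))
  have hintrep : ∀ z : Y →L[ℝ] ℝ,
      (∫ ω in A, ‖f ω - z‖ ^ p ∂μ) = (L z).toReal := by
    intro z
    rw [hL]
    exact integral_eq_lintegral_of_nonneg_ae
      (Eventually.of_forall fun ω => Real.rpow_nonneg (norm_nonneg _) p) (haesm z)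
  rw [hintrep x₀, hintrep y]
  exact ENNReal.toReal_mono (hLlt y).ne hLI
end

section
/- Let (Ω,F,μ) be a measure space, X a Banach space whose norm is strictly convex, p ∈ (1,∞), f ∈ L^p(Ω,μ;X), and A ∈ F with 0 < μ(A) < ∞. Then there is at most one p-th mean of f in A: if x and y both minimize z ↦ ∫_A ‖f(ω) - z‖^p dμ(ω) over X, then x = y. -/
open MeasureTheory Set

lemma key_strict_mid {X : Type*} [NormedAddCommGroup X] [NormedSpace ℝ X]
    [StrictConvexSpace ℝ X] {p : ℝ} (hp : 1 < p) {u v : X} (huv : u ≠ v) :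
    ‖(1 / 2 : ℝ) • (u + v)‖ ^ p < (‖u‖ ^ p + ‖v‖ ^ p) / 2 := by
  have hp0 : 0 ≤ p := by linarith
  by_cases hab : ‖u‖ = ‖v‖
  · have h1 : ‖(1 / 2 : ℝ) • (u + v)‖ < ‖u‖ := (norm_midpoint_lt_iff hab).2 huv
    calc ‖(1 / 2 : ℝ) • (u + v)‖ ^ p < ‖u‖ ^ p :=
          Real.rpow_lt_rpow (norm_nonneg _) h1 (by linarith)
      _ = (‖u‖ ^ p + ‖v‖ ^ p) / 2 := by rw [hab]; ring
  · have h1 : ‖(1 / 2 : ℝ) • (u + v)‖ ≤ (1 / 2) * ‖u‖ + (1 / 2) * ‖v‖ := by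
      rw [norm_smul]
      have := norm_add_le u v
      simp only [Real.norm_eq_abs, abs_of_pos (by norm_num : (0:ℝ) < 1/2)]
      nlinarith
    have h2 : ((1:ℝ)/2 * ‖u‖ + 1/2 * ‖v‖) ^ p
        < (1/2) * ‖u‖ ^ p + (1/2) * ‖v‖ ^ p := by
      have := (strictConvexOn_rpow hp).2 (mem_Ici.2 (norm_nonneg u))
        (mem_Ici.2 (norm_nonneg v)) hab (by norm_num : (0:ℝ) < 1/2)
        (by norm_num : (0:ℝ) < 1/2) (by norm_num)
      simpa using this
    calc ‖(1 / 2 : ℝ) • (u + v)‖ ^ p ≤ ((1:ℝ)/2 * ‖u‖ + 1/2 * ‖v‖) ^ p :=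
          Real.rpow_le_rpow (norm_nonneg _) h1 hp0
      _ < (1/2) * ‖u‖ ^ p + (1/2) * ‖v‖ ^ p := h2
      _ = (‖u‖ ^ p + ‖v‖ ^ p) / 2 := by ring

theorem p_mean_unique_of_strictConvex
    {Ω X : Type*} [MeasurableSpace Ω] [NormedAddCommGroup X] [NormedSpace ℝ X]
    [CompleteSpace X] [StrictConvexSpace ℝ X]
    (μ : Measure Ω) (p : ℝ) (hp : 1 < p)
    (f : Ω → X) (hf : MemLp f (ENNReal.ofReal p) μ)
    (A : Set Ω) (hA : MeasurableSet A) (hApos : 0 < μ A) (hAfin : μ A < ⊤)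
    (x y : X)
    (hx : ∀ z : X, (∫ ω in A, ‖f ω - x‖ ^ p ∂μ) ≤ ∫ ω in A, ‖f ω - z‖ ^ p ∂μ)
    (hy : ∀ z : X, (∫ ω in A, ‖f ω - y‖ ^ p ∂μ) ≤ ∫ ω in A, ‖f ω - z‖ ^ p ∂μ) :
    x = y := by
  by_contra hxy
  haveI : Fact (μ A < ⊤) := ⟨hAfin⟩
  set z : X := (1 / 2 : ℝ) • (x + y) with hz
  have hp0 : (0:ℝ) < p := by linarith
  have hpe0 : ENNReal.ofReal p ≠ 0 := by
    simp [ENNReal.ofReal_eq_zero]; linarith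
  have hpet : ENNReal.ofReal p ≠ ⊤ := ENNReal.ofReal_ne_top
  have hptr : (ENNReal.ofReal p).toReal = p := ENNReal.toReal_ofReal hp0.le
  -- integrability
  have hint : ∀ w : X, Integrable (fun ω => ‖f ω - w‖ ^ p) (μ.restrict A) := by
    intro w
    have h1 : MemLp (fun ω => f ω - w) (ENNReal.ofReal p) (μ.restrict A) :=
      (hf.restrict A).sub (memLp_const w)
    have := h1.integrable_norm_rpow hpe0 hpet
    rwa [hptr] at this
  -- pointwise strict inequality
  have hpt : ∀ ω, ‖f ω - z‖ ^ p < (‖f ω - x‖ ^ p + ‖f ω - y‖ ^ p) / 2 := by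
    intro ω
    have hid : (1 / 2 : ℝ) • ((f ω - x) + (f ω - y)) = f ω - z := by
      rw [hz, show (f ω - x) + (f ω - y) = (2:ℝ) • f ω - (x + y) by
        rw [two_smul]; abel]
      rw [smul_sub, smul_smul]
      norm_num
    rw [← hid]
    exact key_strict_mid hp (fun h => hxy (sub_right_injective h))
  -- integral strict inequality
  have hg1 : Integrable (fun ω => (‖f ω - x‖ ^ p + ‖f ω - y‖ ^ p) / 2)
      (μ.restrict A) := ((hint x).add (hint y)).div_const 2
  have hhint : Integrable (fun ω => (‖f ω - x‖ ^ p + ‖f ω - y‖ ^ p) / 2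
      - ‖f ω - z‖ ^ p) (μ.restrict A) := hg1.sub (hint z)
  have hpos : 0 < ∫ ω in A, ((‖f ω - x‖ ^ p + ‖f ω - y‖ ^ p) / 2
      - ‖f ω - z‖ ^ p) ∂μ := by
    rw [integral_pos_iff_support_of_nonneg_ae
      (Filter.Eventually.of_forall fun ω => sub_nonneg.2 (hpt ω).le) hhint]
    have hsupp : Function.support (fun ω => (‖f ω - x‖ ^ p + ‖f ω - y‖ ^ p) / 2
        - ‖f ω - z‖ ^ p) = univ := by
      ext ω; simp [Function.mem_support, sub_ne_zero]
      exact (hpt ω).ne'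
    rw [hsupp]
    simpa [Measure.restrict_apply_univ] using hApos
  rw [integral_sub hg1 (hint z)] at hpos
  have hsplit : (∫ ω in A, (‖f ω - x‖ ^ p + ‖f ω - y‖ ^ p) / 2 ∂μ)
      = ((∫ ω in A, ‖f ω - x‖ ^ p ∂μ) + ∫ ω in A, ‖f ω - y‖ ^ p ∂μ) / 2 := by
    rw [integral_div, integral_add (hint x) (hint y)]
  have hEq : (∫ ω in A, ‖f ω - x‖ ^ p ∂μ) = ∫ ω in A, ‖f ω - y‖ ^ p ∂μ :=
    le_antisymm (hx y) (hy x)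
  have hxz := hx z
  rw [hsplit, ← hEq] at hpos
  linarith
end

section
/- Let (Ω,F,μ) be a measure space, X a Banach space with Gâteaux differentiable norm, p ∈ (1,∞), f ∈ L^p(Ω,μ;X), and A ∈ F with 0 < μ(A) < ∞. If x is a p-th mean of f in A, then for every v ∈ X the function R(a) = ∫_A ‖f(ω) - (x + a v)‖^p dμ(ω) is convex and differentiable, attains its minimum at a = 0, and R'(0) = ∫_A p ‖f(ω) - x‖^{p-1} ∂(‖f(ω) - x‖)(v) dμ(ω) = 0. -/
open MeasureTheory Set Filter Topology

lemma abs_rpow_deriv {p : ℝ} (hp : 1 < p) :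
    HasDerivAt (fun t : ℝ => |t| ^ p) 0 0 := by
  rw [hasDerivAt_iff_tendsto_slope]
  have h0 : Tendsto (fun t : ℝ => |t| ^ (p - 1)) (𝓝[≠] (0:ℝ)) (𝓝 0) := by
    have hc : ContinuousAt (fun t : ℝ => |t| ^ (p - 1)) 0 :=
      ((Real.continuous_rpow_const (by linarith)).comp continuous_abs).continuousAt
    have h2 : Tendsto (fun t : ℝ => |t| ^ (p - 1)) (𝓝[≠] (0:ℝ)) (𝓝 (|(0:ℝ)| ^ (p-1))) :=
      hc.tendsto.mono_left nhdsWithin_le_nhds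
    simpa [Real.zero_rpow (by linarith : p - 1 ≠ 0)] using h2
  apply squeeze_zero_norm' ?_ h0
  filter_upwards [self_mem_nhdsWithin] with t (ht : t ≠ 0)
  have htpos : (0:ℝ) < |t| := abs_pos.mpr ht
  have h2 : slope (fun t : ℝ => |t| ^ p) 0 t = |t| ^ p / t := by
    simp [slope_def_field, Real.zero_rpow (by linarith : p ≠ 0)]
  have h1 : |(|t| ^ p / t)| = |t| ^ p / |t| := by
    rw [abs_div, abs_of_nonneg (Real.rpow_nonneg (abs_nonneg t) p)]
  rw [h2, Real.norm_eq_abs, h1, Real.rpow_sub htpos, Real.rpow_one]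

lemma gateaux_hasDerivAt {X : Type*} [NormedAddCommGroup X] [NormedSpace ℝ X] {z v : X} {d : ℝ}
    (h : Tendsto (fun t : ℝ => (‖z + t • v‖ - ‖z‖) / t) (𝓝[≠] 0) (𝓝 d)) :
    HasDerivAt (fun t : ℝ => ‖z + t • v‖) d 0 ∧ |d| ≤ ‖v‖ := by
  constructor
  · rw [hasDerivAt_iff_tendsto_slope]
    refine h.congr' ?_
    filter_upwards [self_mem_nhdsWithin] with t (ht : t ≠ 0)
    simp [slope_def_field]
  · have habs : Tendsto (fun t : ℝ => |(‖z + t • v‖ - ‖z‖) / t|) (𝓝[≠] 0) (𝓝 |d|) := h.abs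
    refine le_of_tendsto habs ?_
    filter_upwards [self_mem_nhdsWithin] with t (ht : t ≠ 0)
    have h1 : |‖z + t • v‖ - ‖z‖| ≤ ‖t • v‖ := by
      simpa using abs_norm_sub_norm_le (z + t • v) z
    rw [abs_div]
    rw [div_le_iff₀ (abs_pos.mpr ht)]
    calc |‖z + t • v‖ - ‖z‖| ≤ ‖t • v‖ := h1
      _ = ‖v‖ * |t| := by rw [norm_smul, Real.norm_eq_abs, mul_comm]

lemma core_deriv {X : Type*} [NormedAddCommGroup X] [NormedSpace ℝ X] {p : ℝ} (hp : 1 < p)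
    (hG : ∀ z : X, z ≠ 0 → ∀ v : X,
      ∃ d : ℝ, Tendsto (fun t : ℝ => (‖z + t • v‖ - ‖z‖) / t) (𝓝[≠] 0) (𝓝 d))
    (z v : X) (a : ℝ) :
    ∃ d : ℝ, HasDerivAt (fun t : ℝ => ‖z - t • v‖ ^ p) d a ∧
      |d| ≤ p * ‖z - a • v‖ ^ (p - 1) * ‖v‖ := by
  have hfun : ∀ t : ℝ, z - t • v = (z - a • v) + (t - a) • (-v) := by
    intro t; rw [smul_neg]; rw [sub_smul]; abel
  by_cases hw : z - a • v = 0
  · refine ⟨0, ?_, ?_⟩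
    · have heq : (fun t : ℝ => ‖z - t • v‖ ^ p) = fun t : ℝ => |t - a| ^ p * ‖v‖ ^ p := by
        funext t
        rw [hfun t, hw, zero_add, norm_smul, norm_neg, Real.norm_eq_abs,
          Real.mul_rpow (abs_nonneg _) (norm_nonneg _)]
      rw [heq]
      have h1 : HasDerivAt (fun t : ℝ => |t - a| ^ p) 0 a := by
        have ha : HasDerivAt (fun t : ℝ => |t| ^ p) 0 (a - a) := by
          rw [sub_self]; exact abs_rpow_deriv hp
        exact ha.comp_sub_const a a
      simpa using h1.mul_const (‖v‖ ^ p)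
    · have : ‖z - a • v‖ ^ (p - 1) = 0 := by
        rw [hw, norm_zero, Real.zero_rpow (by linarith : p - 1 ≠ 0)]
      simp [this]
  · obtain ⟨d, hd⟩ := hG (z - a • v) hw (-v)
    obtain ⟨hder, hdle⟩ := gateaux_hasDerivAt hd
    have hshift : HasDerivAt (fun t : ℝ => ‖z - t • v‖) d a := by
      have hder' : HasDerivAt (fun t : ℝ => ‖(z - a • v) + t • (-v)‖) d (a - a) := by
        rw [sub_self]; exact hder
      have h1 : HasDerivAt (fun t : ℝ => ‖(z - a • v) + (t - a) • (-v)‖) d a :=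
        hder'.comp_sub_const a a
      have h2 : (fun t : ℝ => ‖(z - a • v) + (t - a) • (-v)‖) = fun t : ℝ => ‖z - t • v‖ := by
        funext t; rw [← hfun t]
      rw [h2] at h1
      exact h1
    have hr : HasDerivAt (fun s : ℝ => s ^ p) (p * ‖z - a • v‖ ^ (p - 1)) ‖z - a • v‖ :=
      Real.hasDerivAt_rpow_const (Or.inr hp.le)
    refine ⟨p * ‖z - a • v‖ ^ (p - 1) * d, by have h := hr.comp a hshift; exact h, ?_⟩
    rw [abs_mul]
    have h3 : |p * ‖z - a • v‖ ^ (p - 1)| = p * ‖z - a • v‖ ^ (p - 1) :=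
      abs_of_nonneg (mul_nonneg (by linarith) (Real.rpow_nonneg (norm_nonneg _) _))
    rw [h3]
    have h4 : |d| ≤ ‖v‖ := by simpa using hdle
    exact mul_le_mul_of_nonneg_left h4
      (mul_nonneg (by linarith) (Real.rpow_nonneg (norm_nonneg _) _))

lemma rpow_sub_one_le_one_add {s : ℝ} (hs : 0 ≤ s) {p : ℝ} (hp : 1 < p) :
    s ^ (p - 1) ≤ 1 + s ^ p := by
  rcases le_total s 1 with h | h
  · have h1 := Real.rpow_le_one hs h (by linarith : (0:ℝ) ≤ p - 1)
    have h2 : 0 ≤ s ^ p := Real.rpow_nonneg hs p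
    linarith
  · have h1 := Real.rpow_le_rpow_of_exponent_le h (by linarith : p - 1 ≤ p)
    linarith

theorem p_mean_first_order_condition
    {Ω X : Type*} [MeasurableSpace Ω] [NormedAddCommGroup X] [NormedSpace ℝ X]
    [CompleteSpace X]
    (μ : Measure Ω) (p : ℝ) (hp : 1 < p)
    -- the norm of X is Gâteaux differentiable away from 0
    (hG : ∀ z : X, z ≠ 0 → ∀ v : X,
      ∃ d : ℝ, Tendsto (fun t : ℝ => (‖z + t • v‖ - ‖z‖) / t) (𝓝[≠] 0) (𝓝 d))
    (f : Ω → X) (hf : MemLp f (ENNReal.ofReal p) μ)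
    (A : Set Ω) (hA : MeasurableSet A) (hApos : 0 < μ A) (hAfin : μ A < ⊤)
    (x : X)
    -- x is a p-th mean of f in A
    (hx : ∀ z : X, (∫ ω in A, ‖f ω - x‖ ^ p ∂μ) ≤ ∫ ω in A, ‖f ω - z‖ ^ p ∂μ)
    (v : X) (D : Ω → ℝ)
    -- D ω is the Gâteaux derivative of the norm at f ω - x in the direction of the
    -- curve a ↦ f ω - (x + a v)
    (hD : ∀ ω : Ω, f ω ≠ x →
      HasDerivAt (fun a : ℝ => ‖f ω - (x + a • v)‖) (D ω) 0) :
    let R : ℝ → ℝ := fun a => ∫ ω in A, ‖f ω - (x + a • v)‖ ^ p ∂μ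
    ConvexOn ℝ Set.univ R ∧ (∀ a : ℝ, ∃ d : ℝ, HasDerivAt R d a) ∧
    (∀ a : ℝ, R 0 ≤ R a) ∧
    HasDerivAt R (∫ ω in A, p * ‖f ω - x‖ ^ (p - 1) * D ω ∂μ) 0 ∧
    (∫ ω in A, p * ‖f ω - x‖ ^ (p - 1) * D ω ∂μ) = 0 := by
  intro R
  have hRe : R = fun a : ℝ => ∫ ω in A, ‖f ω - (x + a • v)‖ ^ p ∂μ := rfl
  have hp0 : (0:ℝ) < p := by linarith
  have hpne : ENNReal.ofReal p ≠ 0 := by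
    simp only [ne_eq, ENNReal.ofReal_eq_zero, not_le]; exact hp0
  have hsub : ∀ (ω : Ω) (t : ℝ), f ω - (x + t • v) = (f ω - x) - t • v := fun ω t => by
    rw [sub_add_eq_sub_sub]
  have hfinM : IsFiniteMeasure (μ.restrict A) :=
    ⟨by rwa [Measure.restrict_apply_univ]⟩
  have hfA : MemLp f (ENNReal.ofReal p) (μ.restrict A) := hf.restrict A
  -- integrability of ω ↦ ‖f ω - y‖ ^ p on A
  have hInt : ∀ y : X, Integrable (fun ω => ‖f ω - y‖ ^ p) (μ.restrict A) := by
    intro y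
    have h1 : MemLp (fun ω => f ω - y) (ENNReal.ofReal p) (μ.restrict A) :=
      hfA.sub (memLp_const y)
    have h2 := h1.integrable_norm_rpow hpne ENNReal.ofReal_ne_top
    rwa [ENNReal.toReal_ofReal hp0.le] at h2
  -- measurability of the integrands
  have hFm : ∀ t : ℝ, AEStronglyMeasurable (fun ω => ‖f ω - (x + t • v)‖ ^ p)
      (μ.restrict A) := by
    intro t
    have h1 : AEStronglyMeasurable (fun ω => ‖f ω - (x + t • v)‖) (μ.restrict A) :=
      (hfA.1.sub aestronglyMeasurable_const).norm
    exact (Real.continuous_rpow_const hp0.le).comp_aestronglyMeasurable h1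
  -- pointwise derivatives everywhere
  have hcore : ∀ (a : ℝ) (ω : Ω), ∃ d : ℝ,
      HasDerivAt (fun t : ℝ => ‖f ω - (x + t • v)‖ ^ p) d a ∧
      |d| ≤ p * ‖f ω - (x + a • v)‖ ^ (p - 1) * ‖v‖ := by
    intro a ω
    obtain ⟨d, hd, hb⟩ := core_deriv hp hG (f ω - x) v a
    have heq : (fun t : ℝ => ‖(f ω - x) - t • v‖ ^ p)
        = fun t : ℝ => ‖f ω - (x + t • v)‖ ^ p := by
      funext t; rw [hsub]
    rw [heq] at hd
    refine ⟨d, hd, ?_⟩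
    rw [hsub]; exact hb
  have hDeriv : ∀ (a : ℝ) (ω : Ω),
      HasDerivAt (fun t : ℝ => ‖f ω - (x + t • v)‖ ^ p)
        (deriv (fun t : ℝ => ‖f ω - (x + t • v)‖ ^ p) a) a := by
    intro a ω
    obtain ⟨d, hd, _⟩ := hcore a ω
    have := hd.deriv
    rw [this]; exact hd
  have hDerivle : ∀ (a : ℝ) (ω : Ω),
      |deriv (fun t : ℝ => ‖f ω - (x + t • v)‖ ^ p) a|
        ≤ p * ‖f ω - (x + a • v)‖ ^ (p - 1) * ‖v‖ := by
    intro a ω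
    obtain ⟨d, hd, hb⟩ := hcore a ω
    rwa [hd.deriv]
  -- measurability of the derivative
  have hDm : ∀ a : ℝ, AEStronglyMeasurable
      (fun ω => deriv (fun t : ℝ => ‖f ω - (x + t • v)‖ ^ p) a) (μ.restrict A) := by
    intro a
    apply aestronglyMeasurable_of_tendsto_ae (u := (atTop : Filter ℕ))
      (f := fun (n : ℕ) ω =>
        (‖f ω - (x + (a + ((n:ℝ)+1)⁻¹) • v)‖ ^ p - ‖f ω - (x + a • v)‖ ^ p) * ((n:ℝ)+1))
    · intro n
      exact ((hFm _).sub (hFm _)).mul_const _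
    · apply Eventually.of_forall
      intro ω
      have hd := hDeriv a ω
      rw [hasDerivAt_iff_tendsto_slope] at hd
      have hpos : ∀ n : ℕ, (0:ℝ) < ((n:ℝ)+1)⁻¹ := by
        intro n; positivity
      have hseq : Tendsto (fun n : ℕ => a + ((n:ℝ)+1)⁻¹) atTop (𝓝[≠] a) := by
        apply tendsto_nhdsWithin_of_tendsto_nhds_of_eventually_within
        · have h1 : Tendsto (fun n : ℕ => ((n:ℝ)+1)⁻¹) atTop (𝓝 0) := by
            simpa [one_div] using tendsto_one_div_add_atTop_nhds_zero_nat (𝕜 := ℝ)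
          simpa using tendsto_const_nhds.add h1
        · apply Eventually.of_forall
          intro n
          simp only [mem_compl_iff, mem_singleton_iff]
          have hps := (hpos n).ne'
          intro hcontra
          apply hps
          linarith
      have hcomp := hd.comp hseq
      refine hcomp.congr fun n => ?_
      have hne : ((n:ℝ)+1)⁻¹ ≠ 0 := (hpos n).ne'
      rw [Function.comp_apply, slope_def_field]
      rw [add_sub_cancel_left]
      rw [div_eq_mul_inv, inv_inv]
  -- the Lipschitz bound is integrable
  have hBnd : ∀ a : ℝ, Integrable
      (fun ω => p * (‖f ω - x‖ + (|a|+1) * ‖v‖) ^ (p-1) * ‖v‖) (μ.restrict A) := by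
    intro a
    set C := (|a|+1) * ‖v‖ with hC
    have hC0 : 0 ≤ C := by positivity
    have hgmem : MemLp (fun ω => ‖f ω - x‖ + C) (ENNReal.ofReal p) (μ.restrict A) :=
      ((hfA.sub (memLp_const x)).norm).add (memLp_const C)
    have hgint := hgmem.integrable_norm_rpow hpne ENNReal.ofReal_ne_top
    rw [ENNReal.toReal_ofReal hp0.le] at hgint
    have hgint' : Integrable (fun ω => (‖f ω - x‖ + C) ^ p) (μ.restrict A) := by
      refine hgint.congr (Eventually.of_forall fun ω => ?_)
      have hnn : ‖‖f ω - x‖ + C‖ = ‖f ω - x‖ + C := Real.norm_of_nonneg (by positivity)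
      simp only [hnn]
    have hmaj : Integrable (fun ω => p * (1 + (‖f ω - x‖ + C) ^ p) * ‖v‖) (μ.restrict A) :=
      (((integrable_const (1:ℝ)).add hgint').const_mul p).mul_const ‖v‖
    refine hmaj.mono' ?_ (Eventually.of_forall fun ω => ?_)
    · have h1 : AEStronglyMeasurable (fun ω => ‖f ω - x‖ + C) (μ.restrict A) :=
        ((hfA.1.sub aestronglyMeasurable_const).norm).add aestronglyMeasurable_const
      exact (((Real.continuous_rpow_const (by linarith)).comp_aestronglyMeasurable
        h1).const_mul p).mul_const ‖v‖
    · have h2 : (‖f ω - x‖ + C) ^ (p-1) ≤ 1 + (‖f ω - x‖ + C) ^ p :=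
        rpow_sub_one_le_one_add (by positivity) hp
      have h3 : (0:ℝ) ≤ p * (‖f ω - x‖ + C) ^ (p-1) * ‖v‖ := by positivity
      rw [Real.norm_of_nonneg h3]
      have := mul_le_mul_of_nonneg_left h2 hp0.le
      exact mul_le_mul_of_nonneg_right this (norm_nonneg v)
  -- the key differentiability statement, via differentiation under the integral
  have hKey : ∀ a : ℝ, HasDerivAt R
      (∫ ω in A, deriv (fun t : ℝ => ‖f ω - (x + t • v)‖ ^ p) a ∂μ) a := by
    intro a
    have hlip : ∀ᵐ ω ∂(μ.restrict A),
        LipschitzOnWith (Real.nnabs (p * (‖f ω - x‖ + (|a|+1) * ‖v‖) ^ (p-1) * ‖v‖))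
          (fun t : ℝ => ‖f ω - (x + t • v)‖ ^ p) (Metric.ball a 1) := by
      apply Eventually.of_forall
      intro ω
      apply (convex_ball a 1).lipschitzOnWith_of_nnnorm_deriv_le
        (fun t _ => (hDeriv t ω).differentiableAt)
      intro t ht
      rw [← NNReal.coe_le_coe, coe_nnnorm, Real.coe_nnabs, Real.norm_eq_abs]
      refine (hDerivle t ω).trans (le_trans ?_ (le_abs_self _))
      have hnorm : ‖f ω - (x + t • v)‖ ≤ ‖f ω - x‖ + (|a|+1) * ‖v‖ := by
        rw [hsub]
        refine (norm_sub_le _ _).trans ?_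
        have h1 : ‖t • v‖ = |t| * ‖v‖ := by rw [norm_smul, Real.norm_eq_abs]
        rw [h1]
        have h2 : |t| ≤ |a| + 1 := by
          have h3 : |t - a| < 1 := by
            rw [Metric.mem_ball, Real.dist_eq] at ht; exact ht
          have := abs_sub_abs_le_abs_sub t a
          linarith
        have := mul_le_mul_of_nonneg_right h2 (norm_nonneg v)
        linarith
      have hr := Real.rpow_le_rpow (norm_nonneg _) hnorm (by linarith : (0:ℝ) ≤ p - 1)
      have h4 := mul_le_mul_of_nonneg_left hr hp0.le
      exact mul_le_mul_of_nonneg_right h4 (norm_nonneg v)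
    have hmain := hasDerivAt_integral_of_dominated_loc_of_lip
      (F := fun (t : ℝ) ω => ‖f ω - (x + t • v)‖ ^ p)
      (F' := fun ω => deriv (fun t : ℝ => ‖f ω - (x + t • v)‖ ^ p) a)
      (μ := μ.restrict A) (x₀ := a)
      (bound := fun ω => p * (‖f ω - x‖ + (|a|+1) * ‖v‖) ^ (p-1) * ‖v‖)
      (Metric.ball_mem_nhds a one_pos) (Eventually.of_forall hFm) (hInt (x + a • v)) (hDm a) hlip (hBnd a)
      (Eventually.of_forall fun ω => hDeriv a ω)
    exact hmain.2
  -- minimality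
  have hmin : ∀ a : ℝ, R 0 ≤ R a := by
    intro a
    have h0 : R 0 = ∫ ω in A, ‖f ω - x‖ ^ p ∂μ := by
      rw [hRe]; simp only [zero_smul, add_zero]
    rw [h0]
    exact hx (x + a • v)
  -- convexity
  have hconv : ConvexOn ℝ (univ : Set ℝ) R := by
    refine ⟨convex_univ, ?_⟩
    intro a _ b _ c d hc hd hcd
    simp only [smul_eq_mul, hRe]
    have key : ∀ ω : Ω, ‖f ω - (x + (c*a + d*b) • v)‖ ^ p
        ≤ c * ‖f ω - (x + a • v)‖ ^ p + d * ‖f ω - (x + b • v)‖ ^ p := by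
      intro ω
      have hdecomp : f ω - (x + (c*a + d*b) • v)
          = c • (f ω - (x + a • v)) + d • (f ω - (x + b • v)) := by
        have hmod : c • (f ω - (x + a • v)) + d • (f ω - (x + b • v))
            = (c + d) • (f ω - x) - (c*a + d*b) • v := by
          module
        rw [hmod, hcd, one_smul, sub_add_eq_sub_sub]
      have h1 : ‖f ω - (x + (c*a + d*b) • v)‖
          ≤ c * ‖f ω - (x + a • v)‖ + d * ‖f ω - (x + b • v)‖ := by
        rw [hdecomp]
        refine (norm_add_le _ _).trans ?_
        rw [norm_smul, norm_smul, Real.norm_eq_abs, Real.norm_eq_abs,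
          abs_of_nonneg hc, abs_of_nonneg hd]
      have h2 := Real.rpow_le_rpow (norm_nonneg _) h1 hp0.le
      refine h2.trans ?_
      have h3 := (convexOn_rpow hp.le).2 (mem_Ici.mpr (norm_nonneg (f ω - (x + a • v))))
        (mem_Ici.mpr (norm_nonneg (f ω - (x + b • v)))) hc hd hcd
      simpa using h3
    have hIa := hInt (x + a • v)
    have hIb := hInt (x + b • v)
    have hRHS : Integrable
        (fun ω => c * ‖f ω - (x + a • v)‖ ^ p + d * ‖f ω - (x + b • v)‖ ^ p)
        (μ.restrict A) := (hIa.const_mul c).add (hIb.const_mul d)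
    calc ∫ ω in A, ‖f ω - (x + (c*a + d*b) • v)‖ ^ p ∂μ
        ≤ ∫ ω in A, (c * ‖f ω - (x + a • v)‖ ^ p + d * ‖f ω - (x + b • v)‖ ^ p) ∂μ :=
          integral_mono (hInt (x + (c*a + d*b) • v)) hRHS key
      _ = c * ∫ ω in A, ‖f ω - (x + a • v)‖ ^ p ∂μ
          + d * ∫ ω in A, ‖f ω - (x + b • v)‖ ^ p ∂μ := by
          rw [integral_add (hIa.const_mul c) (hIb.const_mul d),
            integral_const_mul, integral_const_mul]
  -- identification of the derivative at 0
  have hident : (fun ω => p * ‖f ω - x‖ ^ (p - 1) * D ω)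
      = fun ω => deriv (fun t : ℝ => ‖f ω - (x + t • v)‖ ^ p) 0 := by
    funext ω
    by_cases h : f ω = x
    · have h1 := hDerivle 0 ω
      have h2 : ‖f ω - (x + (0:ℝ) • v)‖ ^ (p - 1) = 0 := by
        rw [h]; simp [Real.zero_rpow (by linarith : p - 1 ≠ 0)]
      rw [h2] at h1
      simp only [mul_zero, zero_mul] at h1
      have h3 : deriv (fun t : ℝ => ‖f ω - (x + t • v)‖ ^ p) 0 = 0 :=
        abs_nonpos_iff.mp h1
      rw [h3, h, sub_self, norm_zero, Real.zero_rpow (by linarith : p - 1 ≠ 0)]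
      ring
    · have hder := (hD ω h).rpow_const (p := p) (Or.inr hp.le)
      have hval : ‖f ω - (x + (0:ℝ) • v)‖ = ‖f ω - x‖ := by
        simp
      rw [hder.deriv]
      simp only [zero_smul, add_zero]
      ring
  refine ⟨hconv, fun a => ⟨_, hKey a⟩, hmin, ?_, ?_⟩
  · rw [show (fun ω => p * ‖f ω - x‖ ^ (p - 1) * D ω)
      = fun ω => deriv (fun t : ℝ => ‖f ω - (x + t • v)‖ ^ p) 0 from hident]
    exact hKey 0
  · have hloc : IsLocalMin R 0 := Eventually.of_forall hmin
    have hd0 : HasDerivAt R (∫ ω in A, p * ‖f ω - x‖ ^ (p - 1) * D ω ∂μ) 0 := by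
      rw [show (fun ω => p * ‖f ω - x‖ ^ (p - 1) * D ω)
        = fun ω => deriv (fun t : ℝ => ‖f ω - (x + t • v)‖ ^ p) 0 from hident]
      exact hKey 0
    exact hloc.hasDerivAt_eq_zero hd0
end

section
/- Let (Ω,F,μ) be a measure space, X a Banach space, p ∈ [1,∞), k ≥ 1, and f ∈ L^p(Ω,μ;X). Let G_{p,k}(X) denote the set of simple functions in L^p taking at most k values on a measurable partition of Ω. If (h_n) ⊂ G_{p,k}(X) is a minimizing sequence for f (i.e., ‖f - h_n‖_p → inf_{g∈G_{p,k}} ‖f - g‖_p), then there exist a uniformly bounded sequence (g_n) ⊂ G_{p,k}(X) and a subsequence (h'_n) of (h_n) with ‖g_n - h'_n‖_p → 0; in particular (g_n) is also a minimizing sequence for f. -/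
open MeasureTheory Set Filter Topology
open scoped ENNReal NNReal


/-- The set of simple functions in `L^p` taking at most `k` values. -/
def GSet {Ω X : Type*} [MeasurableSpace Ω] [NormedAddCommGroup X]
    (μ : MeasureTheory.Measure Ω) (p : ENNReal) (k : ℕ) : Set (Ω → X) :=
  {g | MeasureTheory.MemLp g p μ ∧ MeasureTheory.StronglyMeasurable g ∧
    ∃ s : Finset X, s.card ≤ k ∧ ∀ ω, g ω ∈ s}

lemma gap_selection (V : ℕ → Finset ℝ) (k : ℕ) (hV : ∀ n, (V n).card ≤ k) :
    ∃ (M0 : ℕ) (φ : ℕ → ℕ), StrictMono φ ∧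
      ∀ j, ∀ x ∈ V (φ j), (M0 : ℝ) < x → (j : ℝ) < x := by
  classical
  set c : ℕ → ℕ → ℕ := fun n M => ((V n).filter (fun x => (M : ℝ) < x)).card with hc
  have hcmono : ∀ n, ∀ {M M' : ℕ}, M ≤ M' → c n M' ≤ c n M := by
    intro n M M' hMM'
    refine Finset.card_le_card (Finset.monotone_filter_right _ ?_)
    intro x _ hx
    exact lt_of_le_of_lt (by exact_mod_cast hMM') hx
  have hck : ∀ n M, c n M ≤ k := fun n M =>
    le_trans (Finset.card_le_card (Finset.filter_subset _ _)) (hV n)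
  set P : ℕ → ℕ → Prop := fun M cc => {n | cc ≤ c n M}.Infinite with hP
  set d : ℕ → ℕ := fun M => Nat.findGreatest (P M) k with hd
  have hP0 : ∀ M, P M 0 := by
    intro M
    have : {n | 0 ≤ c n M} = Set.univ := by ext n; simp
    simp only [hP, this]
    exact Set.infinite_univ
  have hPd : ∀ M, P M (d M) := fun M => Nat.findGreatest_spec (Nat.zero_le k) (hP0 M)
  have hdanti : ∀ {M M' : ℕ}, M ≤ M' → d M' ≤ d M := by
    intro M M' hMM'
    refine Nat.findGreatest_mono_left (fun cc hcc => ?_) k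
    exact hcc.mono (fun n hn => le_trans hn (hcmono n hMM'))
  obtain ⟨M0, hM0⟩ : ∃ M0, ∀ M, d M0 ≤ d M := by
    have hne : (Set.range d).Nonempty := ⟨d 0, ⟨0, rfl⟩⟩
    obtain ⟨M0, hM0⟩ := Nat.sInf_mem hne
    exact ⟨M0, fun M => hM0 ▸ Nat.sInf_le ⟨M, rfl⟩⟩
  have hfin : {n | d M0 + 1 ≤ c n M0}.Finite := by
    by_cases hdk : d M0 + 1 ≤ k
    · have hng : ¬ P M0 (d M0 + 1) :=
        Nat.findGreatest_is_greatest (Nat.lt_succ_self _) hdk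
      exact Set.not_infinite.mp hng
    · have hempty : {n | d M0 + 1 ≤ c n M0} = ∅ := by
        ext n
        simp only [Set.mem_setOf_eq, Set.mem_empty_iff_false, iff_false]
        have := hck n M0
        omega
      rw [hempty]; exact Set.finite_empty
  have hGood : ∀ j : ℕ,
      ({n | d M0 ≤ c n (max M0 j)} \ {n | d M0 + 1 ≤ c n M0}).Infinite := by
    intro j
    have hdj : d (max M0 j) = d M0 :=
      le_antisymm (hdanti (le_max_left _ _)) (hM0 _)
    have h1 : P (max M0 j) (d M0) := hdj ▸ hPd (max M0 j)
    exact h1.diff hfin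
  have hsel : ∀ (a j : ℕ), ∃ b, a < b ∧ d M0 ≤ c b (max M0 j) ∧ c b M0 ≤ d M0 := by
    intro a j
    obtain ⟨b, hb, hab⟩ := (hGood j).exists_gt a
    obtain ⟨hb1, hb2⟩ := hb
    refine ⟨b, hab, hb1, ?_⟩
    simp only [Set.mem_setOf_eq] at hb2
    omega
  choose F hF1 hF2 hF3 using hsel
  set φ : ℕ → ℕ := fun j => Nat.rec (F 0 0) (fun j ih => F ih (j + 1)) j with hφ
  have hφsucc : ∀ j, φ (j + 1) = F (φ j) (j + 1) := fun j => rfl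
  have hmono : StrictMono φ :=
    strictMono_nat_of_lt_succ (fun j => by rw [hφsucc]; exact hF1 _ _)
  have hφmem : ∀ j, d M0 ≤ c (φ j) (max M0 j) ∧ c (φ j) M0 ≤ d M0 := by
    intro j
    cases j with
    | zero => exact ⟨hF2 0 0, hF3 0 0⟩
    | succ j => rw [hφsucc]; exact ⟨hF2 _ _, hF3 _ _⟩
  refine ⟨M0, φ, hmono, fun j x hx hMx => ?_⟩
  obtain ⟨h1, h2⟩ := hφmem j
  have hsub : (V (φ j)).filter (fun x => ((max M0 j : ℕ) : ℝ) < x) ⊆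
      (V (φ j)).filter (fun x => (M0 : ℝ) < x) := by
    refine Finset.monotone_filter_right _ ?_
    intro y _ hy
    exact lt_of_le_of_lt (by exact_mod_cast Nat.le_max_left M0 j) hy
  have heq := Finset.eq_of_subset_of_card_le hsub (le_trans h2 h1)
  have hxin : x ∈ (V (φ j)).filter (fun x => ((max M0 j : ℕ) : ℝ) < x) := by
    rw [heq]; exact Finset.mem_filter.mpr ⟨hx, hMx⟩
  have hmax := (Finset.mem_filter.mp hxin).2
  calc (j : ℝ) ≤ ((max M0 j : ℕ) : ℝ) := by exact_mod_cast Nat.le_max_right M0 j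
    _ < x := hmax

theorem minimizing_sequence_bounded
    {Ω X : Type*} [MeasurableSpace Ω] [NormedAddCommGroup X] [NormedSpace ℝ X]
    [CompleteSpace X]
    (μ : Measure Ω) (p : ENNReal) (hp : 1 ≤ p) (hp' : p ≠ ⊤) (k : ℕ) (hk : 1 ≤ k)
    (f : Ω → X) (hf : MemLp f p μ)
    (h : ℕ → Ω → X) (hmem : ∀ n, h n ∈ GSet μ p k)
    (hmin : Tendsto (fun n => eLpNorm (f - h n) p μ) atTop
      (𝓝 (⨅ g ∈ GSet (X := X) μ p k, eLpNorm (f - g) p μ))) :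
    ∃ (g : ℕ → Ω → X) (φ : ℕ → ℕ), StrictMono φ ∧
      (∀ n, g n ∈ GSet μ p k) ∧
      (∃ M : ℝ, ∀ n ω, ‖g n ω‖ ≤ M) ∧
      Tendsto (fun n => eLpNorm (g n - h (φ n)) p μ) atTop (𝓝 0) ∧
      Tendsto (fun n => eLpNorm (f - g n) p μ) atTop
        (𝓝 (⨅ g' ∈ GSet (X := X) μ p k, eLpNorm (f - g') p μ)) := by
  classical
  set m := ⨅ g ∈ GSet (X := X) μ p k, eLpNorm (f - g) p μ with hm
  have hp0 : p ≠ 0 := (lt_of_lt_of_le zero_lt_one hp).ne'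
  set q := p.toReal with hqdef
  have hq1 : (1 : ℝ) ≤ q := by
    have := ENNReal.toReal_mono hp' hp
    simpa using this
  have hq0 : (0 : ℝ) < q := lt_of_lt_of_le one_pos hq1
  have hL : ∀ u : Ω → X,
      (∫⁻ ω, (‖u ω‖₊ : ℝ≥0∞) ^ q ∂μ) = eLpNorm u p μ ^ q := by
    intro u
    rw [eLpNorm_eq_lintegral_rpow_enorm_toReal hp0 hp']
    simp only [enorm_eq_nnnorm]
    rw [← ENNReal.rpow_mul,
      one_div_mul_cancel hq0.ne', ENNReal.rpow_one]
  have hmle : ∀ g ∈ GSet (X := X) μ p k, m ≤ eLpNorm (f - g) p μ :=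
    fun g hg => iInf₂_le g hg
  have hmtop : m ≠ ⊤ :=
    (lt_of_le_of_lt (hmle (h 0) (hmem 0)) (hf.sub (hmem 0).1).2).ne
  have hmqtop : m ^ q ≠ ⊤ := (ENNReal.rpow_lt_top_of_nonneg hq0.le hmtop).ne
  -- uniform bound on the mass of h n
  obtain ⟨N, hN⟩ : ∃ N, ∀ n ≥ N, eLpNorm (f - h n) p μ ≤ m + 1 := by
    have := hmin.eventually_le_const (ENNReal.lt_add_right hmtop one_ne_zero)
    exact eventually_atTop.mp this
  set B := ((Finset.range N).sup fun n => eLpNorm (f - h n) p μ) ⊔ (m + 1) with hB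
  have hBtop : B ≠ ⊤ := by
    rw [← lt_top_iff_ne_top]
    refine sup_lt_iff.mpr ⟨?_, ?_⟩
    · refine (Finset.sup_lt_iff (by simp : (⊥ : ℝ≥0∞) < ⊤)).mpr ?_
      intro n _
      exact (hf.sub (hmem n).1).2
    · exact ENNReal.add_lt_top.mpr ⟨lt_top_iff_ne_top.mpr hmtop, ENNReal.one_lt_top⟩
  have hBall : ∀ n, eLpNorm (f - h n) p μ ≤ B := by
    intro n
    rcases lt_or_ge n N with hn | hn
    · exact le_sup_of_le_left (Finset.le_sup (f := fun n => eLpNorm (f - h n) p μ) (Finset.mem_range.mpr hn))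
    · exact le_sup_of_le_right (hN n hn)
  set D := (B + eLpNorm f p μ) ^ q with hDdef
  have hDtop : D ≠ ⊤ := by
    refine (ENNReal.rpow_lt_top_of_nonneg hq0.le ?_).ne
    exact ENNReal.add_ne_top.mpr ⟨hBtop, hf.2.ne⟩
  have hDbound : ∀ n, (∫⁻ ω, (‖h n ω‖₊ : ℝ≥0∞) ^ q ∂μ) ≤ D := by
    intro n
    rw [hL]
    refine ENNReal.rpow_le_rpow ?_ hq0.le
    have hdecomp : h n = (h n - f) + f := by funext ω; simp
    calc eLpNorm (h n) p μ = eLpNorm ((h n - f) + f) p μ := by rw [← hdecomp]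
      _ ≤ eLpNorm (h n - f) p μ + eLpNorm f p μ :=
          eLpNorm_add_le ((hmem n).2.1.aestronglyMeasurable.sub hf.1) hf.1 hp
      _ ≤ B + eLpNorm f p μ := by
          rw [eLpNorm_sub_comm]
          exact add_le_add_left (hBall n) _
  -- choose value sets and apply gap selection
  choose s hs1 hs2 using fun n => (hmem n).2.2
  obtain ⟨M0, φ, hφ, hgap⟩ := gap_selection (fun n => (s n).image (fun x => ‖x‖)) k
    (fun n => le_trans Finset.card_image_le (hs1 n))
  have hgap' : ∀ j x, x ∈ s (φ j) → (M0 : ℝ) < ‖x‖ → (j : ℝ) < ‖x‖ :=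
    fun j x hx => hgap j ‖x‖ (Finset.mem_image_of_mem _ hx)
  -- the truncation
  set S : ℕ → Set Ω := fun j => {ω | (M0 : ℝ) < ‖h (φ j) ω‖} with hSdef
  have hSmeas : ∀ j, MeasurableSet (S j) :=
    fun j => measurableSet_lt measurable_const (hmem (φ j)).2.1.norm.measurable
  set g : ℕ → Ω → X := fun j => (S j)ᶜ.indicator (h (φ j)) with hgdef
  have hgS : ∀ j, ∀ ω ∈ S j, g j ω = 0 :=
    fun j ω hω => Set.indicator_of_notMem (by simpa using hω) _
  have hgSc : ∀ j, ∀ ω ∉ S j, g j ω = h (φ j) ω :=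
    fun j ω hω => Set.indicator_of_mem (by simpa using hω) _
  have hgnorm : ∀ j ω, ‖g j ω‖ ≤ (M0 : ℝ) := by
    intro j ω
    by_cases hω : ω ∈ S j
    · rw [hgS j ω hω]; simp
    · rw [hgSc j ω hω]
      simp only [hSdef, Set.mem_setOf_eq, not_lt] at hω
      exact hω
  have hbig : ∀ j, ∀ ω ∈ S j, (j : ℝ) < ‖h (φ j) ω‖ :=
    fun j ω hω => hgap' j _ (hs2 (φ j) ω) hω
  -- GSet membership of g j
  have hgmem : ∀ j, g j ∈ GSet μ p k := by
    intro j
    by_cases hcase : ∃ x ∈ s (φ j), (M0 : ℝ) < ‖x‖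
    · refine ⟨(hmem (φ j)).1.indicator (hSmeas j).compl,
        (hmem (φ j)).2.1.indicator (hSmeas j).compl, ?_⟩
      obtain ⟨x0, hx0s, hx0⟩ := hcase
      refine ⟨insert 0 ((s (φ j)).filter (fun x => ‖x‖ ≤ (M0 : ℝ))), ?_, ?_⟩
      · have hlt : ((s (φ j)).filter (fun x => ‖x‖ ≤ (M0 : ℝ))).card < (s (φ j)).card := by
          refine Finset.card_lt_card ?_
          rw [Finset.ssubset_iff_of_subset (Finset.filter_subset _ _)]
          exact ⟨x0, hx0s, fun hmem' => absurd (Finset.mem_filter.mp hmem').2 (not_le.mpr hx0)⟩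
        calc (insert (0 : X) ((s (φ j)).filter (fun x => ‖x‖ ≤ (M0 : ℝ)))).card
            ≤ ((s (φ j)).filter (fun x => ‖x‖ ≤ (M0 : ℝ))).card + 1 := Finset.card_insert_le _ _
          _ ≤ (s (φ j)).card := hlt
          _ ≤ k := hs1 (φ j)
      · intro ω
        by_cases hω : ω ∈ S j
        · rw [hgS j ω hω]; exact Finset.mem_insert_self 0 _
        · rw [hgSc j ω hω]
          refine Finset.mem_insert_of_mem (Finset.mem_filter.mpr ⟨hs2 (φ j) ω, ?_⟩)
          simp only [hSdef, Set.mem_setOf_eq, not_lt] at hω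
          exact hω
    · have hgeq : g j = h (φ j) := by
        funext ω
        have hω : ω ∉ S j := by
          intro hω
          exact hcase ⟨h (φ j) ω, hs2 (φ j) ω, hω⟩
        exact hgSc j ω hω
      rw [hgeq]; exact hmem (φ j)
  -- measure of S j tends to zero
  have hmuS : ∀ j : ℕ, 1 ≤ j → μ (S j) ≤ D * ((j : ℝ≥0∞) ^ q)⁻¹ := by
    intro j hj
    have hne0 : ((j : ℝ≥0∞)) ^ q ≠ 0 := by
      refine (ENNReal.rpow_pos ?_ (ENNReal.natCast_ne_top j)).ne'
      exact_mod_cast Nat.pos_of_ne_zero (by omega)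
    have hnetop : ((j : ℝ≥0∞)) ^ q ≠ ⊤ :=
      ENNReal.rpow_ne_top_of_nonneg hq0.le (ENNReal.natCast_ne_top j)
    have hsub : S j ⊆ {ω | ((j : ℝ≥0∞)) ^ q ≤ (‖h (φ j) ω‖₊ : ℝ≥0∞) ^ q} := by
      intro ω hω
      have h1 : (j : ℝ) < ‖h (φ j) ω‖ := hbig j ω hω
      have h2 : ((j : ℝ≥0∞)) ≤ (‖h (φ j) ω‖₊ : ℝ≥0∞) := by
        have : (j : ℝ) ≤ (‖h (φ j) ω‖₊ : ℝ) := by rw [coe_nnnorm]; exact h1.le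
        exact_mod_cast this
      exact ENNReal.rpow_le_rpow h2 hq0.le
    calc μ (S j) ≤ μ {ω | ((j : ℝ≥0∞)) ^ q ≤ (‖h (φ j) ω‖₊ : ℝ≥0∞) ^ q} := measure_mono hsub
      _ ≤ (∫⁻ ω, (‖h (φ j) ω‖₊ : ℝ≥0∞) ^ q ∂μ) / ((j : ℝ≥0∞) ^ q) :=
          meas_ge_le_lintegral_div ((hmem (φ j)).2.1.enorm.pow_const q).aemeasurable hne0 hnetop
      _ ≤ D / ((j : ℝ≥0∞) ^ q) := by
          exact ENNReal.div_le_div_right (hDbound (φ j)) _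
      _ = D * ((j : ℝ≥0∞) ^ q)⁻¹ := by rw [div_eq_mul_inv]
  have htendS : Tendsto (fun j => μ (S j)) atTop (𝓝 0) := by
    have h1 : Tendsto (fun j : ℕ => ((j : ℝ≥0∞))⁻¹ ^ q) atTop (𝓝 0) := by
      have hc : Continuous (fun x : ℝ≥0∞ => x ^ q) := ENNReal.continuous_rpow_const
      have := (hc.tendsto 0).comp ENNReal.tendsto_inv_nat_nhds_zero
      simpa [Function.comp_def, ENNReal.zero_rpow_of_pos hq0] using this
    have h2 : Tendsto (fun j : ℕ => ((j : ℝ≥0∞) ^ q)⁻¹) atTop (𝓝 0) := by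
      simpa [ENNReal.inv_rpow] using h1
    have hub : Tendsto (fun j : ℕ => D * ((j : ℝ≥0∞) ^ q)⁻¹) atTop (𝓝 0) := by
      simpa using ENNReal.Tendsto.const_mul h2 (Or.inr hDtop)
    refine tendsto_of_tendsto_of_tendsto_of_le_of_le' tendsto_const_nhds hub
      (Eventually.of_forall (fun j => zero_le)) (eventually_atTop.mpr ⟨1, hmuS⟩)
  -- absolute continuity of the integral of f
  have hFf : (∫⁻ ω, (‖f ω‖₊ : ℝ≥0∞) ^ q ∂μ) ≠ ⊤ := by
    rw [hL]
    exact (ENNReal.rpow_lt_top_of_nonneg hq0.le hf.2.ne).ne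
  have hFtend : Tendsto (fun j => ∫⁻ ω in S j, (‖f ω‖₊ : ℝ≥0∞) ^ q ∂μ) atTop (𝓝 0) :=
    tendsto_setLIntegral_zero hFf htendS
  -- main quantities
  set A : ℕ → ℝ≥0∞ := fun j => ∫⁻ ω in S j, (‖(f - h (φ j)) ω‖₊ : ℝ≥0∞) ^ q ∂μ with hAdef
  set Bq : ℕ → ℝ≥0∞ := fun j => ∫⁻ ω in (S j)ᶜ, (‖(f - h (φ j)) ω‖₊ : ℝ≥0∞) ^ q ∂μ with hBqdef
  set Fq : ℕ → ℝ≥0∞ := fun j => ∫⁻ ω in S j, (‖f ω‖₊ : ℝ≥0∞) ^ q ∂μ with hFqdef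
  have hsplit : ∀ j, A j + Bq j = ∫⁻ ω, (‖(f - h (φ j)) ω‖₊ : ℝ≥0∞) ^ q ∂μ :=
    fun j => lintegral_add_compl _ (hSmeas j)
  have hcomp : ∀ j, (∫⁻ ω, (‖(f - g j) ω‖₊ : ℝ≥0∞) ^ q ∂μ) = Fq j + Bq j := by
    intro j
    rw [← lintegral_add_compl (fun ω => (‖(f - g j) ω‖₊ : ℝ≥0∞) ^ q) (hSmeas j)]
    congr 1
    · refine setLIntegral_congr_fun (hSmeas j) (fun ω hω => ?_)
      rw [Pi.sub_apply, hgS j ω hω, sub_zero]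
    · refine setLIntegral_congr_fun (hSmeas j).compl (fun ω hω => ?_)
      rw [Pi.sub_apply, hgSc j ω hω, Pi.sub_apply]
  have hJφ : Tendsto (fun j => ∫⁻ ω, (‖(f - h (φ j)) ω‖₊ : ℝ≥0∞) ^ q ∂μ) atTop (𝓝 (m ^ q)) := by
    have hc : Continuous (fun x : ℝ≥0∞ => x ^ q) := ENNReal.continuous_rpow_const
    have hJ : Tendsto (fun n => ∫⁻ ω, (‖(f - h n) ω‖₊ : ℝ≥0∞) ^ q ∂μ) atTop (𝓝 (m ^ q)) := by
      have := (hc.tendsto m).comp hmin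
      simp only [Function.comp_def] at this
      simp only [hL]
      exact this
    exact hJ.comp (hφ.tendsto_atTop)
  have hAtend : Tendsto A atTop (𝓝 0) := by
    rw [ENNReal.tendsto_nhds_zero]
    intro ε hε
    have hupper : Tendsto (fun j => (∫⁻ ω, (‖(f - h (φ j)) ω‖₊ : ℝ≥0∞) ^ q ∂μ) + Fq j)
        atTop (𝓝 (m ^ q)) := by
      have := hJφ.add hFtend
      simpa using this
    have hlt := hupper.eventually_lt_const (ENNReal.lt_add_right hmqtop hε.ne')
    filter_upwards [hlt] with j hj
    have h1 : m ^ q ≤ Bq j + Fq j := by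
      have h2 : m ^ q ≤ (∫⁻ ω, (‖(f - g j) ω‖₊ : ℝ≥0∞) ^ q ∂μ) := by
        rw [hL]
        exact ENNReal.rpow_le_rpow (hmle (g j) (hgmem j)) hq0.le
      rw [hcomp j] at h2
      calc m ^ q ≤ Fq j + Bq j := h2
        _ = Bq j + Fq j := add_comm _ _
    have hkey : A j + m ^ q ≤ (∫⁻ ω, (‖(f - h (φ j)) ω‖₊ : ℝ≥0∞) ^ q ∂μ) + Fq j := by
      calc A j + m ^ q ≤ A j + (Bq j + Fq j) := add_le_add_right h1 _
        _ = (A j + Bq j) + Fq j := by rw [add_assoc]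
        _ = _ := by rw [hsplit j]
    have hfinal : A j + m ^ q < ε + m ^ q := by
      calc A j + m ^ q ≤ _ := hkey
        _ < m ^ q + ε := hj
        _ = ε + m ^ q := add_comm _ _
    exact ((ENNReal.add_lt_add_iff_right hmqtop).mp hfinal).le
  -- back to eLpNorm
  have hrpowc : Continuous (fun x : ℝ≥0∞ => x ^ (1 / q)) := ENNReal.continuous_rpow_const
  have hA' : Tendsto (fun j => A j ^ (1 / q)) atTop (𝓝 0) := by
    have := (hrpowc.tendsto 0).comp hAtend
    simp only [Function.comp_def] at this
    rwa [ENNReal.zero_rpow_of_pos (by positivity : (0:ℝ) < 1 / q)] at this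
  have hF' : Tendsto (fun j => Fq j ^ (1 / q)) atTop (𝓝 0) := by
    have := (hrpowc.tendsto 0).comp hFtend
    simp only [Function.comp_def] at this
    rwa [ENNReal.zero_rpow_of_pos (by positivity : (0:ℝ) < 1 / q)] at this
  have hLind : ∀ (u : Ω → X) (j : ℕ),
      eLpNorm ((S j).indicator u) p μ = (∫⁻ ω in S j, (‖u ω‖₊ : ℝ≥0∞) ^ q ∂μ) ^ (1 / q) := by
    intro u j
    rw [eLpNorm_eq_lintegral_rpow_enorm_toReal hp0 hp']
    congr 1
    rw [← lintegral_indicator (hSmeas j)]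
    refine lintegral_congr fun ω => ?_
    by_cases hω : ω ∈ S j
    · simp [Set.indicator_of_mem hω, enorm_eq_nnnorm, hqdef]
    · simp [Set.indicator_of_notMem hω, ENNReal.zero_rpow_of_pos hq0, ENNReal.toReal_pos hp0 hp']
  have hid : ∀ j, g j - h (φ j) = (S j).indicator (f - h (φ j)) - (S j).indicator f := by
    intro j
    funext ω
    by_cases hω : ω ∈ S j
    · simp only [Pi.sub_apply, hgS j ω hω, Set.indicator_of_mem hω, Pi.sub_apply]
      abel
    · simp [Pi.sub_apply, hgSc j ω hω, Set.indicator_of_notMem hω]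
  have hgh : Tendsto (fun j => eLpNorm (g j - h (φ j)) p μ) atTop (𝓝 0) := by
    have hub : ∀ j, eLpNorm (g j - h (φ j)) p μ ≤ A j ^ (1 / q) + Fq j ^ (1 / q) := by
      intro j
      rw [hid j]
      have h1 : AEStronglyMeasurable ((S j).indicator (f - h (φ j))) μ :=
        (hf.1.sub (hmem (φ j)).2.1.aestronglyMeasurable).indicator (hSmeas j)
      have h2 : AEStronglyMeasurable ((S j).indicator f) μ := hf.1.indicator (hSmeas j)
      calc eLpNorm ((S j).indicator (f - h (φ j)) - (S j).indicator f) p μ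
          ≤ eLpNorm ((S j).indicator (f - h (φ j))) p μ + eLpNorm ((S j).indicator f) p μ :=
            eLpNorm_sub_le h1 h2 hp
        _ = A j ^ (1 / q) + Fq j ^ (1 / q) := by rw [hLind, hLind]
    refine tendsto_of_tendsto_of_tendsto_of_le_of_le tendsto_const_nhds
      (by simpa using hA'.add hF') (fun j => zero_le) hub
  have hfg : Tendsto (fun j => eLpNorm (f - g j) p μ) atTop (𝓝 m) := by
    have hub : ∀ j, eLpNorm (f - g j) p μ ≤ eLpNorm (f - h (φ j)) p μ
        + eLpNorm (g j - h (φ j)) p μ := by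
      intro j
      have hdecomp : f - g j = (f - h (φ j)) + (h (φ j) - g j) := by
        funext ω; simp only [Pi.add_apply, Pi.sub_apply]; abel
      calc eLpNorm (f - g j) p μ = eLpNorm ((f - h (φ j)) + (h (φ j) - g j)) p μ := by
            rw [← hdecomp]
        _ ≤ eLpNorm (f - h (φ j)) p μ + eLpNorm (h (φ j) - g j) p μ :=
            eLpNorm_add_le (hf.1.sub (hmem (φ j)).2.1.aestronglyMeasurable)
              ((hmem (φ j)).2.1.aestronglyMeasurable.sub (hgmem j).1.1) hp
        _ = eLpNorm (f - h (φ j)) p μ + eLpNorm (g j - h (φ j)) p μ := by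
            rw [eLpNorm_sub_comm (g j) (h (φ j)) p μ]
    have hupper : Tendsto (fun j => eLpNorm (f - h (φ j)) p μ + eLpNorm (g j - h (φ j)) p μ)
        atTop (𝓝 m) := by
      have := (hmin.comp hφ.tendsto_atTop).add hgh
      simpa using this
    refine tendsto_of_tendsto_of_tendsto_of_le_of_le tendsto_const_nhds hupper
      (fun j => hmle (g j) (hgmem j)) hub
  exact ⟨g, φ, hφ, hgmem, ⟨(M0 : ℝ), hgnorm⟩, hgh, hfg⟩
end

section
/- Let (Ω,F,μ) be a measure space, p ∈ [1,∞), k ≥ 1, and X a dual Banach space whose closed unit ball is weak*-sequentially compact. Then the set G_{p,k}(X) of simple functions in L^p(Ω,μ;X) taking at most k values is proximinal in L^p(Ω,μ;X): every f ∈ L^p(Ω,μ;X) admits g ∈ G_{p,k}(X) with ‖f - g‖_p = inf_{h∈G_{p,k}(X)} ‖f - h‖_p. -/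
open MeasureTheory Set Filter Topology

open scoped ENNReal NNReal

lemma wstar_lsc {Y : Type*} [NormedAddCommGroup Y] [NormedSpace ℝ Y]
    {T : ℕ → Y →L[ℝ] ℝ} {T₀ : Y →L[ℝ] ℝ}
    (h : ∀ y, Tendsto (fun n => T n y) atTop (𝓝 (T₀ y))) :
    (‖T₀‖₊ : ℝ≥0∞) ≤ atTop.liminf (fun n => (‖T n‖₊ : ℝ≥0∞)) := by
  by_contra hcon
  push_neg at hcon
  obtain ⟨r, hr1, hr2⟩ := ENNReal.lt_iff_exists_nnreal_btwn.mp hcon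
  have hfreq : ∃ᶠ n in atTop, (‖T n‖₊ : ℝ≥0∞) < r :=
    frequently_lt_of_liminf_lt (by isBoundedDefault) hr1
  have hr2' : (r : ℝ) < ‖T₀‖ := by
    have := hr2
    rw [ENNReal.coe_lt_coe] at this
    exact_mod_cast this
  obtain ⟨y, hy1, hy2⟩ := T₀.exists_lt_apply_of_lt_opNorm hr2'
  have hev : ∀ᶠ n in atTop, (r : ℝ) < ‖T n y‖ :=
    (h y).norm.eventually (eventually_gt_nhds hy2)
  obtain ⟨n, hn1, hn2⟩ := (hfreq.and_eventually hev).exists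
  have : ‖T n y‖ ≤ ‖T n‖ * ‖y‖ := T n |>.le_opNorm y
  have hTn : ‖T n‖ < r := by exact_mod_cast ENNReal.coe_lt_coe.mp hn1
  nlinarith [norm_nonneg (T n), norm_nonneg y]

lemma iInf_liminf_le {k : ℕ} (a : ℕ → Fin k → ℝ≥0∞) :
    ⨅ i, atTop.liminf (fun n => a n i) ≤ atTop.liminf (fun n => ⨅ i, a n i) := by
  apply le_of_forall_gt_imp_ge_of_dense
  intro c hc
  have hfreq : ∃ᶠ n in atTop, (⨅ i, a n i) < c :=
    frequently_lt_of_liminf_lt (by isBoundedDefault) hc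
  have hfreq' : ∃ᶠ n in atTop, ∃ i, a n i < c := by
    apply hfreq.mono
    intro n hn
    simpa [iInf_lt_iff] using hn
  have : ∃ i, ∃ᶠ n in atTop, a n i < c := by
    by_contra hall
    push_neg at hall
    have : ∀ᶠ n in atTop, ∀ i, c ≤ a n i := eventually_all.mpr hall
    exact (hfreq'.and_eventually this).exists.elim
      (fun n ⟨⟨i, hi⟩, h2⟩ => absurd hi (not_lt.mpr (h2 i)))
  obtain ⟨i, hi⟩ := this
  exact le_trans (iInf_le _ i) (liminf_le_of_frequently_le' (hi.mono fun n h => h.le))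

lemma extract_subseq {Y : Type*} [NormedAddCommGroup Y] [NormedSpace ℝ Y]
    (hwsc : ∀ x : ℕ → (Y →L[ℝ] ℝ), (∀ n, ‖x n‖ ≤ 1) →
      ∃ φ : ℕ → ℕ, StrictMono φ ∧ ∃ x₀ : Y →L[ℝ] ℝ,
        ∀ y : Y, Tendsto (fun n => x (φ n) y) atTop (𝓝 (x₀ y))) :
    ∀ (m : ℕ) (u : Fin m → ℕ → Y →L[ℝ] ℝ),
    ∃ φ : ℕ → ℕ, StrictMono φ ∧ ∀ i,
      (Tendsto (fun n => ‖u i (φ n)‖) atTop atTop) ∨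
      (∃ z : Y →L[ℝ] ℝ, ∀ y, Tendsto (fun n => u i (φ n) y) atTop (𝓝 (z y))) := by
  intro m
  induction m with
  | zero => exact fun u => ⟨id, strictMono_id, fun i => i.elim0⟩
  | succ m ih =>
    intro u
    obtain ⟨φ₁, hφ₁, h₁⟩ := ih (fun i => u i.castSucc)
    set v := fun n => u (Fin.last m) (φ₁ n) with hv
    by_cases hb : Tendsto (fun n => ‖v n‖) atTop atTop
    · refine ⟨φ₁, hφ₁, fun i => ?_⟩
      induction i using Fin.lastCases with
      | last => exact Or.inl hb
      | cast j => exact h₁ j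
    · rw [tendsto_atTop] at hb
      push_neg at hb
      obtain ⟨C, hC⟩ := hb
      obtain ⟨ψ, hψ, hψC⟩ := extraction_of_frequently_atTop
        (P := fun n => ‖v n‖ ≤ C) (hC.mono fun n h => h.le)
      set R : ℝ := max C 0 + 1 with hR
      have hR0 : 0 < R := by positivity
      have hnorm : ∀ n, ‖R⁻¹ • v (ψ n)‖ ≤ 1 := by
        intro n
        rw [norm_smul R⁻¹ (v (ψ n)), norm_inv, Real.norm_of_nonneg hR0.le,
          inv_mul_le_one₀ hR0]
        calc ‖v (ψ n)‖ ≤ C := hψC n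
        _ ≤ R := by rw [hR]; linarith [le_max_left C 0]
      obtain ⟨φ₂, hφ₂, z₀, hz₀⟩ := hwsc _ hnorm
      refine ⟨φ₁ ∘ ψ ∘ φ₂, hφ₁.comp (hψ.comp hφ₂), fun i => ?_⟩
      induction i using Fin.lastCases with
      | last =>
        refine Or.inr ⟨R • z₀, fun y => ?_⟩
        have := (hz₀ y).const_mul R
        simp only [ContinuousLinearMap.smul_apply, smul_eq_mul] at this ⊢
        convert this using 2 with n
        simp only [Function.comp_apply]
        field_simp
        rfl
      | cast j =>
        rcases h₁ j with h | ⟨z, hz⟩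
        · exact Or.inl (h.comp ((hψ.comp hφ₂).tendsto_atTop))
        · exact Or.inr ⟨z, fun y => (hz y).comp ((hψ.comp hφ₂).tendsto_atTop)⟩

/-- Theorem 1: `G_{p,k}(X)` is proximinal in `L^p(Ω,μ;X)` whenever `X` is a dual
Banach space with weak*-sequentially compact unit ball. -/
theorem Gpk_proximinal
    {Ω Y : Type*} [MeasurableSpace Ω] [NormedAddCommGroup Y] [NormedSpace ℝ Y]
    [CompleteSpace Y]
    (μ : Measure Ω) (p : ENNReal) (hp : 1 ≤ p) (hp' : p ≠ ⊤) (k : ℕ) (hk : 1 ≤ k)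
    -- the unit ball of X = Y* is weak*-sequentially compact
    (hwsc : ∀ x : ℕ → (Y →L[ℝ] ℝ), (∀ n, ‖x n‖ ≤ 1) →
      ∃ φ : ℕ → ℕ, StrictMono φ ∧ ∃ x₀ : Y →L[ℝ] ℝ,
        ∀ y : Y, Tendsto (fun n => x (φ n) y) atTop (𝓝 (x₀ y)))
    (f : Ω → (Y →L[ℝ] ℝ)) (hf : MemLp f p μ) :
    ∃ g ∈ GSet (X := Y →L[ℝ] ℝ) μ p k,
      eLpNorm (f - g) p μ = ⨅ h ∈ GSet (X := Y →L[ℝ] ℝ) μ p k, eLpNorm (f - h) p μ := by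
  classical
  have hp0 : p ≠ 0 := fun h => by simp [h] at hp
  set q : ℝ := p.toReal with hqdef
  have hq0 : 0 < q := ENNReal.toReal_pos hp0 hp'
  obtain ⟨f', hf'sm, hff'⟩ := hf.1
  -- basic measurability
  have hmeasA : ∀ c : Y →L[ℝ] ℝ, Measurable fun ω => (‖f' ω - c‖₊ : ℝ≥0∞) ^ q :=
    fun c => ((hf'sm.sub stronglyMeasurable_const).enorm).pow_const q
  -- rewrite eLpNorm as a lintegral
  have hsnorm : ∀ h : Ω → Y →L[ℝ] ℝ,
      eLpNorm (f - h) p μ = (∫⁻ ω, (‖f ω - h ω‖₊ : ℝ≥0∞) ^ q ∂μ) ^ (1/q) := by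
    intro h
    rw [eLpNorm_eq_lintegral_rpow_enorm_toReal hp0 hp']
    rfl
  set Φ : (Fin k → (Y →L[ℝ] ℝ)) → ℝ≥0∞ :=
    fun x => ∫⁻ ω, ⨅ i, (‖f' ω - x i‖₊ : ℝ≥0∞) ^ q ∂μ with hΦdef
  set D := ⨅ x : Fin k → (Y →L[ℝ] ℝ), Φ x with hDdef
  -- lower bound for members of GSet
  have hlow : ∀ h ∈ GSet (X := Y →L[ℝ] ℝ) μ p k,
      D ≤ ∫⁻ ω, (‖f ω - h ω‖₊ : ℝ≥0∞) ^ q ∂μ := by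
    rintro h ⟨hmem, hsm, s, hcard, hval⟩
    set x : Fin k → (Y →L[ℝ] ℝ) := fun i => s.toList.getD i 0 with hxdef
    have hpt : ∀ ω, (⨅ i, (‖f' ω - x i‖₊ : ℝ≥0∞) ^ q) ≤ (‖f' ω - h ω‖₊ : ℝ≥0∞) ^ q := by
      intro ω
      obtain ⟨n, hn, hget⟩ := List.mem_iff_getElem.mp (Finset.mem_toList.mpr (hval ω))
      have hnk : n < k := lt_of_lt_of_le (by simpa using hn) hcard
      refine le_trans (iInf_le _ ⟨n, hnk⟩) (le_of_eq ?_)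
      have hx : x ⟨n, hnk⟩ = h ω := by
        simp only [hxdef]
        rw [List.getD_eq_getElem _ _ (by simpa using hn)]
        exact hget
      rw [hx]
    calc D ≤ Φ x := iInf_le _ x
    _ ≤ ∫⁻ ω, (‖f' ω - h ω‖₊ : ℝ≥0∞) ^ q ∂μ := lintegral_mono hpt
    _ = ∫⁻ ω, (‖f ω - h ω‖₊ : ℝ≥0∞) ^ q ∂μ :=
        lintegral_congr_ae (hff'.mono fun ω hh => by simp only [hh])
  -- D is finite
  have hDtop : D ≠ ⊤ := by
    have h0 : (0 : Ω → Y →L[ℝ] ℝ) ∈ GSet (X := Y →L[ℝ] ℝ) μ p k :=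
      ⟨MemLp.zero, stronglyMeasurable_const, ⟨{0}, by simpa using hk, fun ω => by simp⟩⟩
    have h1 := hlow 0 h0
    have h2 : ∫⁻ ω, (‖f ω - (0 : Ω → Y →L[ℝ] ℝ) ω‖₊ : ℝ≥0∞) ^ q ∂μ ≠ ⊤ := by
      have h3 : eLpNorm (f - 0) p μ < ⊤ := by
        rw [sub_zero]; exact hf.2
      rw [hsnorm 0] at h3
      intro hcon
      rw [hcon, ENNReal.top_rpow_of_pos (by positivity : (0:ℝ) < 1/q)] at h3
      exact absurd h3 (lt_irrefl ⊤)
    exact ne_top_of_le_ne_top h2 h1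
  -- minimizing sequence
  have hseq : ∀ n : ℕ, ∃ x, Φ x < D + ((n : ℝ≥0∞) + 1)⁻¹ := by
    intro n
    have hlt : D < D + ((n : ℝ≥0∞) + 1)⁻¹ :=
      ENNReal.lt_add_right hDtop (by simp)
    rw [hDdef] at hlt
    exact iInf_lt_iff.mp hlt
  choose xs hxs using hseq
  obtain ⟨φ, hφ, hdich⟩ := extract_subseq hwsc k (fun i n => xs n i)
  -- liminf of values along the subsequence is at most D
  have hlim : atTop.liminf (fun n => Φ (xs (φ n))) ≤ D := by
    have htend : Tendsto (fun n : ℕ => D + ((n : ℝ≥0∞) + 1)⁻¹) atTop (𝓝 D) := by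
      have h1 : Tendsto (fun n : ℕ => ((n : ℝ≥0∞) + 1)⁻¹) atTop (𝓝 0) := by
        have := ENNReal.tendsto_inv_nat_nhds_zero.comp (tendsto_add_atTop_nat 1)
        convert this using 2 with n
        simp [Function.comp]
      simpa using (tendsto_const_nhds (x := D)).add h1
    have hcomp : Tendsto (fun n => D + ((φ n : ℝ≥0∞) + 1)⁻¹) atTop (𝓝 D) :=
      htend.comp hφ.tendsto_atTop
    calc atTop.liminf (fun n => Φ (xs (φ n)))
        ≤ atTop.liminf (fun n => D + ((φ n : ℝ≥0∞) + 1)⁻¹) :=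
          liminf_le_liminf (Eventually.of_forall fun n => (hxs (φ n)).le)
    _ = D := hcomp.liminf_eq
  -- the limit candidates
  set live : Fin k → Prop :=
    fun i => ∃ z : Y →L[ℝ] ℝ, ∀ y, Tendsto (fun n => xs (φ n) i y) atTop (𝓝 (z y)) with hlivedef
  set z : Fin k → (Y →L[ℝ] ℝ) := fun i => if h : live i then h.choose else 0 with hzdef
  have hzspec : ∀ i, live i → ∀ y, Tendsto (fun n => xs (φ n) i y) atTop (𝓝 (z i y)) := by
    intro i hi y
    simp only [hzdef, dif_pos hi]
    exact hi.choose_spec y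
  -- pointwise liminf lower bound
  have key : ∀ ω, (⨅ i, if live i then (‖f' ω - z i‖₊ : ℝ≥0∞) ^ q else ⊤)
      ≤ atTop.liminf (fun n => ⨅ i, (‖f' ω - xs (φ n) i‖₊ : ℝ≥0∞) ^ q) := by
    intro ω
    refine le_trans (le_iInf fun i => le_trans (iInf_le _ i) ?_) (iInf_liminf_le fun n i => (‖f' ω - xs (φ n) i‖₊ : ℝ≥0∞) ^ q)
    by_cases hi : live i
    · rw [if_pos hi]
      have h1 : (‖f' ω - z i‖₊ : ℝ≥0∞) ≤ atTop.liminf (fun n => (‖f' ω - xs (φ n) i‖₊ : ℝ≥0∞)) := by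
        apply wstar_lsc
        intro y
        simp only [ContinuousLinearMap.sub_apply]
        exact (tendsto_const_nhds (x := f' ω y)).sub (hzspec i hi y)
      calc (‖f' ω - z i‖₊ : ℝ≥0∞) ^ q
          ≤ (atTop.liminf (fun n => (‖f' ω - xs (φ n) i‖₊ : ℝ≥0∞))) ^ q :=
            ENNReal.rpow_le_rpow h1 hq0.le
      _ = atTop.liminf (fun n => (‖f' ω - xs (φ n) i‖₊ : ℝ≥0∞) ^ q) := by
          have hmono : Monotone (fun a : ℝ≥0∞ => a ^ q) :=
            fun a b hab => ENNReal.rpow_le_rpow hab hq0.le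
          exact hmono.map_liminf_of_continuousAt _
            (ENNReal.continuous_rpow_const.continuousAt)
    · rw [if_neg hi]
      have hdead : Tendsto (fun n => ‖xs (φ n) i‖) atTop atTop := by
        rcases hdich i with h | h
        · exact h
        · exact absurd h hi
      have hreal : Tendsto (fun n => ‖f' ω - xs (φ n) i‖) atTop atTop := by
        apply tendsto_atTop_mono (fun n => ?_)
          (tendsto_atTop_add_const_right atTop (-‖f' ω‖) hdead)
        have := norm_sub_norm_le (xs (φ n) i) (f' ω)
        have h2 : ‖xs (φ n) i - f' ω‖ = ‖f' ω - xs (φ n) i‖ := norm_sub_rev _ _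
        linarith
      have hcoe : Tendsto (fun n => (‖f' ω - xs (φ n) i‖₊ : ℝ≥0∞)) atTop (𝓝 ⊤) := by
        have := ENNReal.tendsto_ofReal_atTop.comp hreal
        convert this using 2 with n
        exact (ofReal_norm _).symm
      have htop : Tendsto (fun n => (‖f' ω - xs (φ n) i‖₊ : ℝ≥0∞) ^ q) atTop (𝓝 ⊤) := by
        have hc : ContinuousAt (fun a : ℝ≥0∞ => a ^ q) ⊤ :=
          ENNReal.continuous_rpow_const.continuousAt
        have := hc.tendsto.comp hcoe
        rw [ENNReal.top_rpow_of_pos hq0] at this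
        exact this
      rw [htop.liminf_eq]
  -- Fatou
  have hFmeas : ∀ n, Measurable fun ω => ⨅ i, (‖f' ω - xs (φ n) i‖₊ : ℝ≥0∞) ^ q :=
    fun n => Measurable.iInf fun i => hmeasA _
  have hFatou : ∫⁻ ω, atTop.liminf (fun n => ⨅ i, (‖f' ω - xs (φ n) i‖₊ : ℝ≥0∞) ^ q) ∂μ ≤ D :=
    le_trans (lintegral_liminf_le hFmeas) hlim
  have hg0 : (0 : Ω → Y →L[ℝ] ℝ) ∈ GSet (X := Y →L[ℝ] ℝ) μ p k :=
    ⟨MemLp.zero, stronglyMeasurable_const, ⟨{0}, by simpa using hk, fun ω => by simp⟩⟩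
  by_cases hex : ∃ i, live i
  · -- some component has a weak* limit
    obtain ⟨i₀, hi₀⟩ := hex
    set w : Fin k → (Y →L[ℝ] ℝ) := fun j => if live j then z j else z i₀ with hwdef
    set A : Ω → Fin k → ℝ≥0∞ := fun ω j => (‖f' ω - w j‖₊ : ℝ≥0∞) ^ q with hAdef
    have hptw : ∀ ω, (⨅ j, A ω j) ≤ ⨅ i, (if live i then (‖f' ω - z i‖₊ : ℝ≥0∞) ^ q else ⊤) := by
      intro ω
      refine le_iInf fun i => ?_
      by_cases hi : live i
      · rw [if_pos hi]
        refine le_trans (iInf_le _ i) (le_of_eq ?_)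
        simp only [hAdef, hwdef, if_pos hi]
      · simp [if_neg hi]
    have hΦw : Φ w = D := by
      refine le_antisymm ?_ (iInf_le _ w)
      calc Φ w ≤ ∫⁻ ω, atTop.liminf (fun n => ⨅ i, (‖f' ω - xs (φ n) i‖₊ : ℝ≥0∞) ^ q) ∂μ :=
            lintegral_mono fun ω => le_trans (hptw ω) (key ω)
      _ ≤ D := hFatou
    -- measurable argmin selection
    haveI : Nonempty (Fin k) := ⟨⟨0, hk⟩⟩
    have hfind : ∀ ω, ∃ j, A ω j ≤ ⨅ j', A ω j' := by
      intro ω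
      obtain ⟨j₀, hj₀⟩ := Finite.exists_min (fun j => A ω j)
      exact ⟨j₀, le_iInf hj₀⟩
    set ι : Ω → Fin k := fun ω => Fin.find (fun j => A ω j ≤ ⨅ j', A ω j') (hfind ω)
      with hιdef
    have hι_eq : ∀ ω j, ι ω = j ↔
        (A ω j ≤ ⨅ j', A ω j') ∧ ∀ j', (A ω j' ≤ ⨅ i, A ω i) → j ≤ j' := by
      intro ω j
      simp only [hιdef]
      rw [Fin.find_eq_iff]
      exact and_congr_right fun _ => ⟨fun h j' hj' => not_lt.mp fun hlt => h j' hlt hj',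
        fun h j' hlt hj' => absurd (h j' hj') (not_le.mpr hlt)⟩
    have hιspec : ∀ ω, A ω (ι ω) ≤ ⨅ j', A ω j' := fun ω => ((hι_eq ω (ι ω)).mp rfl).1
    have hι_meas : Measurable ι := by
      apply measurable_to_countable'
      intro j
      have hAm : ∀ j', Measurable fun ω => A ω j' := fun j' => hmeasA _
      have hInfm : Measurable fun ω => ⨅ i, A ω i := Measurable.iInf hAm
      have hset : ι ⁻¹' {j} = {ω | A ω j ≤ ⨅ j', A ω j'} ∩
          ⋂ j' : Fin k, {ω | (A ω j' ≤ ⨅ i, A ω i) → j ≤ j'} := by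
        ext ω
        simp only [mem_preimage, mem_singleton_iff, mem_inter_iff, mem_setOf_eq, mem_iInter]
        exact hι_eq ω j
      rw [hset]
      refine (measurableSet_le (hAm j) hInfm).inter (MeasurableSet.iInter fun j' => ?_)
      by_cases hjj : j ≤ j'
      · have huniv : {ω | (A ω j' ≤ ⨅ i, A ω i) → j ≤ j'} = univ := by ext ω; simp [hjj]
        rw [huniv]; exact MeasurableSet.univ
      · have hcompl : {ω | (A ω j' ≤ ⨅ i, A ω i) → j ≤ j'} = {ω | A ω j' ≤ ⨅ i, A ω i}ᶜ := by
          ext ω; simp [hjj]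
        rw [hcompl]; exact (measurableSet_le (hAm j') hInfm).compl
    set g : Ω → (Y →L[ℝ] ℝ) := fun ω => w (ι ω) with hgdef
    have hg_sm : StronglyMeasurable g :=
      ((⟨ι, fun x => hι_meas (measurableSet_singleton x),
        Set.toFinite _⟩ : SimpleFunc Ω (Fin k)).map w).stronglyMeasurable
    have hgq : ∀ ω, (‖f' ω - g ω‖₊ : ℝ≥0∞) ^ q = ⨅ j, A ω j :=
      fun ω => le_antisymm (hιspec ω) (iInf_le _ (ι ω))
    have hΨg : ∫⁻ ω, (‖f ω - g ω‖₊ : ℝ≥0∞) ^ q ∂μ = D := by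
      calc ∫⁻ ω, (‖f ω - g ω‖₊ : ℝ≥0∞) ^ q ∂μ
          = ∫⁻ ω, (‖f' ω - g ω‖₊ : ℝ≥0∞) ^ q ∂μ :=
            lintegral_congr_ae (hff'.mono fun ω hh => by simp only [hh])
      _ = Φ w := lintegral_congr fun ω => hgq ω
      _ = D := hΦw
    have hfg_mem : MemLp (f - g) p μ := by
      refine ⟨hf.1.sub hg_sm.aestronglyMeasurable, ?_⟩
      rw [hsnorm g, hΨg]
      exact ENNReal.rpow_lt_top_of_nonneg (by positivity) hDtop
    have hg_mem : g ∈ GSet (X := Y →L[ℝ] ℝ) μ p k := by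
      refine ⟨?_, hg_sm, Finset.image w Finset.univ,
        le_trans Finset.card_image_le (by simp),
        fun ω => Finset.mem_image_of_mem w (Finset.mem_univ _)⟩
      have hgeq : g = f - (f - g) := by funext ω; simp
      rw [hgeq]
      exact hf.sub hfg_mem
    refine ⟨g, hg_mem, ?_⟩
    have hgD : eLpNorm (f - g) p μ = D ^ (1/q) := by rw [hsnorm g, hΨg]
    rw [hgD]
    refine le_antisymm (le_iInf₂ fun h hh => ?_) ((iInf₂_le g hg_mem).trans hgD.le)
    rw [hsnorm h]
    exact ENNReal.rpow_le_rpow (hlow h hh) (by positivity)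
  · -- all components escape to infinity: μ = 0
    push_neg at hex
    have htop' : ∫⁻ ω, (⊤ : ℝ≥0∞) ∂μ ≤ D := by
      refine le_trans (lintegral_mono fun ω => ?_) hFatou
      have hk' := key ω
      simpa [hex] using hk'
    rw [lintegral_const] at htop'
    have hμ0 : μ = 0 := by
      by_contra hμ
      have hμu : μ univ ≠ 0 := fun h => hμ (Measure.measure_univ_eq_zero.mp h)
      rw [ENNReal.top_mul hμu] at htop'
      exact hDtop (top_le_iff.mp htop')
    have hzero : ∀ h : Ω → Y →L[ℝ] ℝ, eLpNorm (f - h) p μ = 0 := fun h => by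
      rw [hμ0]; exact eLpNorm_measure_zero
    refine ⟨0, hg0, ?_⟩
    rw [hzero 0]
    have hle : (⨅ h ∈ GSet (X := Y →L[ℝ] ℝ) μ p k, eLpNorm (f - h) p μ) ≤ 0 :=
      le_trans (iInf₂_le 0 hg0) (hzero 0).le
    exact (le_antisymm hle zero_le).symm
end

section
/- Let X be a finite-dimensional Banach space, (Ω,F,μ) a measure space, and k ≥ 1. Then the set G_{∞,k}(X) of simple functions taking at most k values is proximinal in L^∞(Ω,μ;X). -/
open MeasureTheory Set Filter Topology
open scoped ENNReal NNReal

/-- For each `x`, there is a unique least index minimizing `‖x - c i‖`. -/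
lemma exists_unique_minIdx {X : Type*} [NormedAddCommGroup X] {k : ℕ} [Nonempty (Fin k)]
    (c : Fin k → X) (x : X) :
    ∃! i : Fin k, (∀ j, ‖x - c i‖ ≤ ‖x - c j‖) ∧
      ∀ j, j < i → ¬(∀ j', ‖x - c j‖ ≤ ‖x - c j'‖) := by
  classical
  set T := Finset.univ.filter (fun i : Fin k => ∀ j, ‖x - c i‖ ≤ ‖x - c j‖) with hT
  have hTne : T.Nonempty := by
    obtain ⟨i, hi⟩ := Finite.exists_min (fun i : Fin k => ‖x - c i‖)
    exact ⟨i, by simp [hT, hi]⟩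
  have hmem : ∀ i, i ∈ T ↔ ∀ j, ‖x - c i‖ ≤ ‖x - c j‖ := fun i => by simp [hT]
  refine ⟨T.min' hTne, ⟨(hmem _).1 (T.min'_mem hTne), ?_⟩, ?_⟩
  · intro j hj hP
    exact absurd hj (not_lt.2 (T.min'_le j ((hmem j).2 hP)))
  · rintro i ⟨hPi, hleast⟩
    have h1 : T.min' hTne ≤ i := T.min'_le i ((hmem i).2 hPi)
    rcases lt_or_eq_of_le h1 with h | h
    · exact absurd ((hmem _).1 (T.min'_mem hTne)) (hleast _ h)
    · exact h.symm

/-- In a finite-dimensional Banach space, `G_{∞,k}(X)` is proximinal in `L^∞`. -/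
theorem Ginftyk_proximinal_of_finiteDimensional
    {Ω X : Type*} [MeasurableSpace Ω] [NormedAddCommGroup X] [NormedSpace ℝ X]
    [FiniteDimensional ℝ X]
    (μ : Measure Ω) (k : ℕ) (hk : 1 ≤ k)
    (f : Ω → X) (hf : MemLp f ⊤ μ) :
    ∃ g ∈ GSet (X := X) μ ⊤ k,
      eLpNorm (f - g) ⊤ μ = ⨅ h ∈ GSet (X := X) μ ⊤ k, eLpNorm (f - h) ⊤ μ := by
  classical
  rcases eq_or_ne μ 0 with hμ0 | hμ0
  · subst hμ0
    have hg0 : (fun _ : Ω => (0 : X)) ∈ GSet (X := X) (0 : Measure Ω) ⊤ k :=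
      ⟨memLp_top_const 0, stronglyMeasurable_const, {0}, by simpa using hk, fun ω => by simp⟩
    refine ⟨fun _ => 0, hg0, ?_⟩
    rw [eLpNorm_measure_zero]
    refine le_antisymm zero_le ?_
    exact (iInf₂_le (fun _ => (0 : X)) hg0).trans (le_of_eq eLpNorm_measure_zero)
  haveI hΩ : Nonempty Ω :=
    ⟨(nonempty_of_measure_ne_zero (fun h => hμ0 (Measure.measure_univ_eq_zero.1 h))).some⟩
  haveI : Nonempty (Fin k) := ⟨⟨0, hk⟩⟩
  borelize X
  set F : (Fin k → X) → ℝ≥0∞ :=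
    fun c => essSup (fun ω => ⨅ i, (‖f ω - c i‖₊ : ℝ≥0∞)) μ with hFdef
  set d : ℝ≥0∞ := ⨅ c : Fin k → X, F c with hddef
  -- Lower bound: `d` is below the distance to any member of `GSet`.
  have hA : ∀ h ∈ GSet (X := X) μ ⊤ k, d ≤ eLpNorm (f - h) ⊤ μ := by
    rintro h ⟨-, -, s, hsc, hss⟩
    have hsne : s.Nonempty := ⟨h (Classical.arbitrary Ω), hss _⟩
    obtain ⟨x₀, hx₀⟩ := hsne
    set c : Fin k → X := fun i => s.toList.getD i x₀ with hc
    have hcov : ∀ y ∈ s, ∃ i : Fin k, c i = y := by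
      intro y hy
      obtain ⟨n, hn, hget⟩ := List.mem_iff_getElem.1 (Finset.mem_toList.2 hy)
      have hnk : n < k := lt_of_lt_of_le (by rwa [Finset.length_toList] at hn) hsc
      refine ⟨⟨n, hnk⟩, ?_⟩
      show s.toList.getD n x₀ = y
      rw [List.getD_eq_getElem s.toList x₀ hn]
      exact hget
    refine (iInf_le F c).trans ?_
    rw [eLpNorm_exponent_top]
    refine essSup_mono_ae (Filter.Eventually.of_forall fun ω => ?_)
    obtain ⟨i, hi⟩ := hcov (h ω) (hss ω)
    simp only [Pi.sub_apply]
    exact iInf_le_of_le i (by rw [hi, ← enorm_eq_nnnorm])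
  -- the essential bound on `f`
  have hMtop : eLpNormEssSup f μ < ⊤ := by
    have := hf.2; rwa [eLpNorm_exponent_top] at this
  set M : NNReal := (eLpNormEssSup f μ).toNNReal with hMdef
  have hMae : ∀ᵐ ω ∂μ, ‖f ω‖ ≤ (M : ℝ) := by
    filter_upwards [ae_le_eLpNormEssSup (f := f) (μ := μ)] with ω hω
    have h1 : (‖f ω‖₊ : ℝ≥0∞) ≤ (M : ℝ≥0∞) := by
      rw [hMdef, ENNReal.coe_toNNReal hMtop.ne]; exact hω
    have h2 : ‖f ω‖₊ ≤ M := by exact_mod_cast h1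
    exact_mod_cast h2
  set R : ℝ := 2 * M + 1 with hRdef
  have hR0 : (0 : ℝ) ≤ R := by positivity
  set S : Set (Fin k → X) := Set.univ.pi fun _ => Metric.closedBall (0 : X) R with hSdef
  -- truncation: the infimum can be restricted to `S`
  have htrunc : ∀ c : Fin k → X, ∃ c' ∈ S, F c' ≤ F c := by
    intro c
    set c' : Fin k → X := fun i => if ‖c i‖ ≤ R then c i else 0 with hc'
    refine ⟨c', ?_, ?_⟩
    · intro i _
      simp only [Metric.mem_closedBall, dist_zero_right, hc']
      split_ifs with h
      · exact h
      · simpa using hR0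
    · refine essSup_mono_ae ?_
      filter_upwards [hMae] with ω hω
      refine le_iInf fun i => iInf_le_of_le i ?_
      rw [hc']
      simp only []
      split_ifs with h
      · exact le_rfl
      · push_neg at h
        have h1 : ‖f ω - (0 : X)‖ ≤ ‖f ω - c i‖ := by
          rw [sub_zero]
          have := norm_sub_norm_le (c i) (f ω)
          have h2 : ‖c i - f ω‖ ≥ R - M := by
            have := norm_sub_norm_le (c i) (f ω)
            nlinarith [norm_sub_norm_le (c i) (f ω), h.le, hω]
          have h3 : ‖f ω - c i‖ = ‖c i - f ω‖ := norm_sub_rev _ _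
          nlinarith [hω]
        exact_mod_cast h1
  have hdS : (⨅ c : S, F (c : Fin k → X)) = d := by
    refine le_antisymm (le_iInf fun c => ?_) (le_iInf fun c => ?_)
    · obtain ⟨c', hc'S, hc'le⟩ := htrunc c
      exact (iInf_le _ (⟨c', hc'S⟩ : S)).trans hc'le
    · exact iInf_le F (c : Fin k → X)
  have hF0 : F (fun _ => 0) = eLpNormEssSup f μ := by
    rw [hFdef]
    simp only [sub_zero, iInf_const]
    rfl
  have hd_top : d < ⊤ := lt_of_le_of_lt (iInf_le F fun _ => 0) (hF0 ▸ hMtop)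
  -- Lipschitz-type estimate for `F`
  have hlip : ∀ c c' : Fin k → X, F c ≤ F c' + ⨆ i, (‖c i - c' i‖₊ : ℝ≥0∞) := by
    intro c c'
    set e : ℝ≥0∞ := ⨆ i, (‖c i - c' i‖₊ : ℝ≥0∞) with he
    have hae : ∀ᵐ ω ∂μ, (⨅ i, (‖f ω - c' i‖₊ : ℝ≥0∞)) ≤ F c' :=
      ae_le_essSup (f := fun ω => ⨅ i, (‖f ω - c' i‖₊ : ℝ≥0∞))
    refine essSup_le_of_ae_le _ ?_
    filter_upwards [hae] with ω hω
    have key : (⨅ i, (‖f ω - c i‖₊ : ℝ≥0∞)) ≤ (⨅ i, (‖f ω - c' i‖₊ : ℝ≥0∞)) + e := by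
      rw [ENNReal.iInf_add]
      refine le_iInf fun i => iInf_le_of_le i ?_
      have h1 : ‖f ω - c i‖₊ ≤ ‖f ω - c' i‖₊ + ‖c i - c' i‖₊ := by
        have : f ω - c i = (f ω - c' i) + (c' i - c i) := by abel
        rw [this]
        refine (nnnorm_add_le _ _).trans ?_
        rw [show c' i - c i = -(c i - c' i) by abel, nnnorm_neg]
      calc (‖f ω - c i‖₊ : ℝ≥0∞) ≤ (‖f ω - c' i‖₊ : ℝ≥0∞) + (‖c i - c' i‖₊ : ℝ≥0∞) := by
            exact_mod_cast h1
        _ ≤ (‖f ω - c' i‖₊ : ℝ≥0∞) + e := add_le_add_right (le_iSup (fun i => ((‖c i - c' i‖₊ : ℝ≥0∞))) i) _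
    exact key.trans (add_le_add_left hω e)
  -- minimizing sequence in the compact set S
  have hseq : ∀ n : ℕ, ∃ c ∈ S, F c < d + ((n : ℝ≥0∞) + 1)⁻¹ := by
    intro n
    have hpos : d < d + ((n : ℝ≥0∞) + 1)⁻¹ := by
      refine ENNReal.lt_add_right hd_top.ne ?_
      exact ENNReal.inv_ne_zero.2 (by simp [ENNReal.add_eq_top])
    have hpos2 : (⨅ c : S, F (c : Fin k → X)) < d + ((n : ℝ≥0∞) + 1)⁻¹ := by
      rw [hdS]; exact hpos
    obtain ⟨⟨c, hcS⟩, hlt⟩ := iInf_lt_iff.1 hpos2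
    exact ⟨c, hcS, hlt⟩
  choose u hu1 hu2 using hseq
  have hScomp : IsCompact S := isCompact_univ_pi fun _ => isCompact_closedBall _ _
  obtain ⟨cstar, hcS, φ, hφ, hconv⟩ := hScomp.tendsto_subseq hu1
  -- the limit is a minimizer
  have hFd : F cstar ≤ d := by
    refine ENNReal.le_of_forall_pos_le_add fun ε hε _ => ?_
    have hε2 : (0 : ℝ) < (ε : ℝ) / 2 := by positivity
    obtain ⟨N1, hN1⟩ := Metric.tendsto_atTop.1 hconv ((ε : ℝ) / 2) hε2
    have hε2' : ((ε : ℝ≥0∞) / 2) ≠ 0 := by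
      simp [ENNReal.div_eq_top, hε.ne']
    obtain ⟨n2, hn2⟩ := ENNReal.exists_inv_nat_lt hε2'
    set j := max N1 n2 with hj
    have hdist : dist (u (φ j) ∘ id) cstar < (ε : ℝ) / 2 := by
      simpa using hN1 j (le_max_left _ _)
    have key1 : (⨆ i, (‖cstar i - u (φ j) i‖₊ : ℝ≥0∞)) ≤ (ε : ℝ≥0∞) / 2 := by
      refine iSup_le fun i => ?_
      have h1 : dist (u (φ j) i) (cstar i) < (ε : ℝ) / 2 :=
        lt_of_le_of_lt (dist_le_pi_dist (u (φ j)) cstar i) (by simpa using hdist)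
      have h2 : ‖cstar i - u (φ j) i‖ ≤ (ε : ℝ) / 2 := by
        rw [← dist_eq_norm, dist_comm]
        exact h1.le
      have h3 : (‖cstar i - u (φ j) i‖₊ : ℝ≥0∞) ≤ ENNReal.ofReal ((ε : ℝ) / 2) := by
        rw [← enorm_eq_nnnorm, ← ofReal_norm]
        exact ENNReal.ofReal_le_ofReal h2
      refine h3.trans ?_
      rw [ENNReal.ofReal_div_of_pos (by norm_num), ENNReal.ofReal_coe_nnreal]
      simp
    have key2 : ((φ j : ℝ≥0∞) + 1)⁻¹ ≤ (ε : ℝ≥0∞) / 2 := by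
      refine le_trans ?_ hn2.le
      refine ENNReal.inv_le_inv.2 ?_
      have : (n2 : ℕ) ≤ φ j + 1 := by
        have h1 : n2 ≤ j := le_max_right _ _
        have h2 : j ≤ φ j := hφ.le_apply
        omega
      exact_mod_cast this
    calc F cstar ≤ F (u (φ j)) + ⨆ i, (‖cstar i - u (φ j) i‖₊ : ℝ≥0∞) := hlip _ _
      _ ≤ (d + ((φ j : ℝ≥0∞) + 1)⁻¹) + (ε : ℝ≥0∞) / 2 :=
          add_le_add (hu2 (φ j)).le key1
      _ ≤ (d + (ε : ℝ≥0∞) / 2) + (ε : ℝ≥0∞) / 2 := add_le_add_left (add_le_add_right key2 d) _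
      _ = d + (ε : ℝ≥0∞) := by rw [add_assoc, ENNReal.add_halves]
  -- construct the nearest-point simple function
  set P : X → Fin k → Prop := fun x i => ∀ j, ‖x - cstar i‖ ≤ ‖x - cstar j‖ with hPdef
  set B : Fin k → Set X := fun i => {x | P x i ∧ ∀ j, j < i → ¬ P x j} with hBdef
  have hBmeas : ∀ i, MeasurableSet (B i) := by
    have h1 : ∀ l : Fin k, MeasurableSet {x : X | P x l} := by
      intro l
      have heq : {x : X | P x l} = ⋂ j, {x : X | ‖x - cstar l‖ ≤ ‖x - cstar j‖} := by
        ext x; simp [hPdef]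
      rw [heq]
      refine MeasurableSet.iInter fun j => ?_
      exact (isClosed_le ((continuous_id.sub continuous_const).norm)
        ((continuous_id.sub continuous_const).norm)).measurableSet
    intro i
    have heq : B i = {x : X | P x i} ∩ ⋂ j, ⋂ _ : j < i, {x : X | P x j}ᶜ := by
      ext x; simp [hBdef]
    rw [heq]
    exact (h1 i).inter (MeasurableSet.iInter fun j => MeasurableSet.iInter fun _ => (h1 j).compl)
  set fs : Ω → X := hf.1.mk f with hfsdef
  have hfs : StronglyMeasurable fs := hf.1.stronglyMeasurable_mk
  have hfe : f =ᵐ[μ] fs := hf.1.ae_eq_mk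
  have hfsm : Measurable fs := hfs.measurable
  set g : Ω → X := fun ω => ∑ i : Fin k, (fs ⁻¹' B i).indicator (fun _ => cstar i) ω with hgdef
  have hgval : ∀ ω, ∃ i, fs ω ∈ B i ∧ g ω = cstar i := by
    intro ω
    obtain ⟨i, hi, huniq⟩ := exists_unique_minIdx cstar (fs ω)
    have hiB : fs ω ∈ B i := hi
    refine ⟨i, hiB, ?_⟩
    rw [hgdef]
    simp only []
    rw [Finset.sum_eq_single i]
    · exact Set.indicator_of_mem (Set.mem_preimage.2 hiB) fun _ => cstar i
    · intro b _ hb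
      exact Set.indicator_of_notMem (s := fs ⁻¹' B b)
        (fun hmem => hb (huniq b hmem)) fun _ => cstar b
    · intro h; exact absurd (Finset.mem_univ i) h
  have hgSM : StronglyMeasurable g := by
    refine Finset.stronglyMeasurable_fun_sum _ fun i _ => ?_
    exact stronglyMeasurable_const.indicator (hfsm (hBmeas i))
  have hgmem : g ∈ GSet (X := X) μ ⊤ k := by
    refine ⟨?_, hgSM, Finset.image cstar Finset.univ, ?_, ?_⟩
    · refine memLp_top_of_bound hgSM.aestronglyMeasurable
        (Finset.univ.sup' Finset.univ_nonempty fun i => ‖cstar i‖) ?_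
      refine Filter.Eventually.of_forall fun ω => ?_
      obtain ⟨i, _, hge⟩ := hgval ω
      rw [hge]
      exact Finset.le_sup' (fun i => ‖cstar i‖) (Finset.mem_univ i)
    · exact (Finset.card_image_le).trans (by simp)
    · intro ω
      obtain ⟨i, _, hge⟩ := hgval ω
      rw [hge]
      exact Finset.mem_image_of_mem cstar (Finset.mem_univ i)
  have hgle : eLpNorm (f - g) ⊤ μ ≤ F cstar := by
    rw [eLpNorm_exponent_top]
    refine essSup_mono_ae ?_
    filter_upwards [hfe] with ω hω
    obtain ⟨i, hBi, hge⟩ := hgval ω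
    simp only [Pi.sub_apply]
    refine le_iInf fun j => ?_
    rw [hω, hge]
    have := hBi.1 j
    exact_mod_cast this
  have h1 : eLpNorm (f - g) ⊤ μ = d := le_antisymm (hgle.trans hFd) (hA g hgmem)
  refine ⟨g, hgmem, ?_⟩
  rw [h1]
  refine le_antisymm (le_iInf fun h => le_iInf fun hh => hA h hh) ?_
  exact (iInf₂_le g hgmem).trans h1.le
end

section
/- Let (Ω,F,μ) be a measure space, X a Banach space, p ∈ [1,∞), k ≥ 1, and f ∈ L^p(Ω,μ;X). If f admits a minimizer g ∈ G_{p,k}(X) (i.e., ‖f-g‖_p = dist(f, G_{p,k}(X))) whose degree r = deg(g) is strictly less than k, then f itself belongs to G_{p,r}(X), i.e., f equals μ-a.e. a simple function taking at most r values. -/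
open MeasureTheory Set Filter Topology
open scoped ENNReal NNReal

theorem mem_Gpr_of_minimizer_low_degree
    {Ω X : Type*} [MeasurableSpace Ω] [NormedAddCommGroup X] [NormedSpace ℝ X]
    [CompleteSpace X]
    (μ : Measure Ω) (p : ENNReal) (hp : 1 ≤ p) (hp' : p ≠ ⊤) (k r : ℕ) (hk : 1 ≤ k)
    (hr : r < k)
    (f : Ω → X) (hf : MemLp f p μ)
    (g : Ω → X) (hg : g ∈ GSet μ p k)
    -- g is a minimizer for f in G_{p,k}(X)
    (hmin : eLpNorm (f - g) p μ = ⨅ h ∈ GSet (X := X) μ p k, eLpNorm (f - h) p μ)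
    -- the degree of g is at most r : g agrees a.e. with a simple function with ≤ r values
    (hdeg : ∃ g' : Ω → X, g' ∈ GSet μ p r ∧ g =ᵐ[μ] g') :
    ∃ s : Ω → X, s ∈ GSet μ p r ∧ f =ᵐ[μ] s := by
  classical
  obtain ⟨g', hg'G, hgg'⟩ := hdeg
  obtain ⟨hg'p, hg'm, sg', hsg', hmemg'⟩ := hg'G
  have hp0 : p ≠ 0 := (zero_lt_one.trans_le hp).ne'
  by_cases h0 : eLpNorm (f - g') p μ = 0
  · refine ⟨g', ⟨hg'p, hg'm, sg', hsg', hmemg'⟩, ?_⟩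
    have := (eLpNorm_eq_zero_iff (hf.sub hg'p).aestronglyMeasurable hp0).mp h0
    filter_upwards [this] with ω hω
    have hω' : f ω - g' ω = 0 := hω
    exact sub_eq_zero.mp hω'
  · exfalso
    set q := p.toReal with hq_def
    have hq : 0 < q := ENNReal.toReal_pos hp0 hp'
    have hfm := hf.aestronglyMeasurable
    set f₀ := hfm.mk f with hf₀_def
    have hf₀m : StronglyMeasurable f₀ := hfm.stronglyMeasurable_mk
    have hff₀ : f =ᵐ[μ] f₀ := hfm.ae_eq_mk
    set φ := fun ω => f₀ ω - g' ω with hφ_def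
    have hφm : StronglyMeasurable φ := hf₀m.sub hg'm
    have heq : eLpNorm (f - g') p μ = eLpNorm φ p μ :=
      eLpNorm_congr_ae (by filter_upwards [hff₀] with ω hω; simp [φ, hω, Pi.sub_apply])
    set I := ∫⁻ ω, (‖φ ω‖₊ : ℝ≥0∞) ^ q ∂μ with hI_def
    have hIrw : eLpNorm φ p μ = I ^ (1/q) :=
      eLpNorm_eq_lintegral_rpow_enorm_toReal hp0 hp'
    have hI_ne_top : I ≠ ∞ := by
      intro hI
      have : eLpNorm φ p μ = ∞ := by
        rw [hIrw, hI, ENNReal.top_rpow_of_pos (by positivity)]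
      exact ((heq ▸ (hf.sub hg'p).eLpNorm_lt_top).ne) this
    -- positive measure set where φ is large
    have hne0 : μ {ω | φ ω ≠ 0} ≠ 0 := by
      intro hB
      apply h0
      rw [heq, eLpNorm_eq_zero_iff hφm.aestronglyMeasurable hp0]
      exact (ae_iff).mpr hB
    have hcover : {ω | φ ω ≠ 0} ⊆ ⋃ n : ℕ, {ω | 1/((n:ℝ)+1) < ‖φ ω‖} := by
      intro ω hω
      obtain ⟨n, hn⟩ := exists_nat_one_div_lt (norm_pos_iff.mpr hω)
      exact mem_iUnion.mpr ⟨n, hn⟩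
    obtain ⟨n, hn⟩ : ∃ n : ℕ, μ {ω | 1/((n:ℝ)+1) < ‖φ ω‖} ≠ 0 := by
      by_contra hco
      push_neg at hco
      exact hne0 (measure_mono_null hcover (measure_iUnion_null hco))
    set δ := 1/((n:ℝ)+1) with hδ_def
    have hδ : 0 < δ := by positivity
    -- separable range: find a good center x
    obtain ⟨c, hc_count, hc_sub⟩ := hf₀m.isSeparable_range
    have hcov2 : {ω | δ < ‖φ ω‖} ⊆
        ⋃ y ∈ c, {ω | δ < ‖φ ω‖ ∧ ‖f₀ ω - y‖ < δ/2} := by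
      intro ω hω
      have hmem : f₀ ω ∈ closure c := hc_sub (mem_range_self ω)
      obtain ⟨y, hyc, hyd⟩ := Metric.mem_closure_iff.mp hmem (δ/2) (by positivity)
      exact mem_biUnion hyc ⟨hω, by rwa [dist_eq_norm] at hyd⟩
    obtain ⟨x, -, hA0⟩ : ∃ y ∈ c, μ {ω | δ < ‖φ ω‖ ∧ ‖f₀ ω - y‖ < δ/2} ≠ 0 := by
      by_contra hco
      push_neg at hco
      exact hn (measure_mono_null hcov2 ((measure_biUnion_null_iff hc_count).mpr hco))
    set A := {ω | δ < ‖φ ω‖ ∧ ‖f₀ ω - x‖ < δ/2} with hA_def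
    have hmeas1 : Measurable fun ω => ‖φ ω‖ := hφm.norm.measurable
    have hmeas2 : Measurable fun ω => ‖f₀ ω - x‖ :=
      (hf₀m.sub stronglyMeasurable_const).norm.measurable
    have hA_meas : MeasurableSet A :=
      (measurableSet_lt measurable_const hmeas1).inter (measurableSet_lt hmeas2 measurable_const)
    have hφq_meas : Measurable fun ω => (‖φ ω‖₊ : ℝ≥0∞) ^ q := hφm.enorm.pow_const q |>.mono le_rfl le_rfl
    -- lower bound on A-part of I
    have hlow : ENNReal.ofReal δ ^ q * μ A ≤ ∫⁻ ω in A, (‖φ ω‖₊ : ℝ≥0∞) ^ q ∂μ := by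
      calc ENNReal.ofReal δ ^ q * μ A = ∫⁻ _ in A, ENNReal.ofReal δ ^ q ∂μ :=
            (setLIntegral_const _ _).symm
        _ ≤ ∫⁻ ω in A, (‖φ ω‖₊ : ℝ≥0∞) ^ q ∂μ := by
            refine setLIntegral_mono hφq_meas fun ω hω => ?_
            have h1 : ENNReal.ofReal δ ≤ (‖φ ω‖₊ : ℝ≥0∞) := by
              exact (ENNReal.ofReal_le_ofReal hω.1.le).trans_eq (ofReal_norm _)
            exact ENNReal.rpow_le_rpow h1 hq.le
    have hδq_pos : (0:ℝ≥0∞) < ENNReal.ofReal δ ^ q :=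
      ENNReal.rpow_pos (ENNReal.ofReal_pos.mpr hδ) ENNReal.ofReal_ne_top
    have hA_lt_top : μ A < ∞ := by
      by_contra hAtop
      push_neg at hAtop
      have : ENNReal.ofReal δ ^ q * μ A = ∞ := by
        rw [top_le_iff.mp hAtop, ENNReal.mul_top hδq_pos.ne']
      exact hI_ne_top (top_le_iff.mp ((this ▸ hlow).trans (setLIntegral_le_lintegral _ _)))
    -- build the competitor h
    set h : Ω → X := fun ω => A.indicator (fun _ => x) ω + Aᶜ.indicator g' ω with hh_def
    have hhA : ∀ ω ∈ A, h ω = x := by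
      intro ω hω
      simp only [hh_def, Set.indicator_of_mem hω,
        Set.indicator_of_notMem (by simpa using hω : ω ∉ Aᶜ), add_zero]
    have hhAc : ∀ ω ∉ A, h ω = g' ω := by
      intro ω hω
      simp only [hh_def, Set.indicator_of_notMem hω,
        Set.indicator_of_mem (by simpa using hω : ω ∈ Aᶜ), zero_add]
    have hhG : h ∈ GSet μ p k := by
      refine ⟨(memLp_indicator_const p hA_meas x (Or.inr hA_lt_top.ne)).add
        (hg'p.indicator hA_meas.compl),
        (stronglyMeasurable_const.indicator hA_meas).add (hg'm.indicator hA_meas.compl),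
        insert x sg', ?_, ?_⟩
      · exact (Finset.card_insert_le _ _).trans (by omega)
      · intro ω
        by_cases hω : ω ∈ A
        · rw [hhA ω hω]; exact Finset.mem_insert_self _ _
        · rw [hhAc ω hω]; exact Finset.mem_insert_of_mem (hmemg' ω)
    -- strict improvement
    set J := ∫⁻ ω, (‖f₀ ω - h ω‖₊ : ℝ≥0∞) ^ q ∂μ with hJ_def
    have hJq_meas : Measurable fun ω => (‖f₀ ω - h ω‖₊ : ℝ≥0∞) ^ q := by
      have hhm : StronglyMeasurable h :=
        (stronglyMeasurable_const.indicator hA_meas).add (hg'm.indicator hA_meas.compl)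
      exact (hf₀m.sub hhm).enorm.pow_const q
    have hJA : ∫⁻ ω in A, (‖f₀ ω - h ω‖₊ : ℝ≥0∞) ^ q ∂μ
        < ∫⁻ ω in A, (‖φ ω‖₊ : ℝ≥0∞) ^ q ∂μ := by
      have hub : ∫⁻ ω in A, (‖f₀ ω - h ω‖₊ : ℝ≥0∞) ^ q ∂μ
          ≤ ENNReal.ofReal (δ/2) ^ q * μ A := by
        calc ∫⁻ ω in A, (‖f₀ ω - h ω‖₊ : ℝ≥0∞) ^ q ∂μ
            ≤ ∫⁻ _ in A, ENNReal.ofReal (δ/2) ^ q ∂μ := by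
              refine setLIntegral_mono measurable_const fun ω hω => ?_
              rw [hhA ω hω]
              exact ENNReal.rpow_le_rpow ((ofReal_norm _).symm.trans_le (ENNReal.ofReal_le_ofReal hω.2.le)) hq.le
          _ = ENNReal.ofReal (δ/2) ^ q * μ A := setLIntegral_const _ _
      have hstrict : ENNReal.ofReal (δ/2) ^ q * μ A < ENNReal.ofReal δ ^ q * μ A := by
        refine ENNReal.mul_lt_mul_left hA0 hA_lt_top.ne ?_
        exact ENNReal.rpow_lt_rpow (by
          exact (ENNReal.ofReal_lt_ofReal_iff hδ).mpr (by linarith)) hq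
      exact lt_of_le_of_lt hub (lt_of_lt_of_le hstrict hlow)
    have hJAc : ∫⁻ ω in Aᶜ, (‖f₀ ω - h ω‖₊ : ℝ≥0∞) ^ q ∂μ
        = ∫⁻ ω in Aᶜ, (‖φ ω‖₊ : ℝ≥0∞) ^ q ∂μ := by
      refine setLIntegral_congr_fun hA_meas.compl (fun ω hω => ?_)
      rw [hhAc ω (by simpa using hω)]
    have hAc_ne_top : ∫⁻ ω in Aᶜ, (‖φ ω‖₊ : ℝ≥0∞) ^ q ∂μ ≠ ∞ :=
      ((setLIntegral_le_lintegral _ _).trans_lt hI_ne_top.lt_top).ne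
    have hJI : J < I := by
      rw [hJ_def, hI_def,
        ← lintegral_add_compl (μ := μ) (fun ω => (‖f₀ ω - h ω‖₊ : ℝ≥0∞) ^ q) hA_meas,
        ← lintegral_add_compl (μ := μ) (fun ω => (‖φ ω‖₊ : ℝ≥0∞) ^ q) hA_meas, hJAc]
      exact ENNReal.add_lt_add_right hAc_ne_top hJA
    -- conclude contradiction with minimality
    have hJrw : eLpNorm (f - h) p μ = J ^ (1/q) := by
      rw [show eLpNorm (f - h) p μ = eLpNorm (fun ω => f₀ ω - h ω) p μ from
        eLpNorm_congr_ae (by filter_upwards [hff₀] with ω hω; simp [hω, Pi.sub_apply])]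
      exact eLpNorm_eq_lintegral_rpow_enorm_toReal hp0 hp'
    have hlt : eLpNorm (f - h) p μ < eLpNorm (f - g') p μ := by
      rw [hJrw, heq, hIrw]
      exact ENNReal.rpow_lt_rpow hJI (by positivity)
    have hge : eLpNorm (f - g') p μ ≤ eLpNorm (f - h) p μ := by
      have h1 : eLpNorm (f - g) p μ = eLpNorm (f - g') p μ :=
        eLpNorm_congr_ae (by filter_upwards [hgg'] with ω hω; simp [hω, Pi.sub_apply])
      rw [← h1, hmin]
      exact iInf₂_le h hhG
    exact absurd (hge.trans_lt hlt) (lt_irrefl _)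
end

section
/- Let (Ω,F,μ) be a measure space, X a Banach space, p ∈ [1,∞), k ≥ 1, and f ∈ L^p(Ω,μ;X) with f ∉ G_{p,k}(X). Then every minimizer h ∈ G_{p,k}(X) for f has degree exactly k, its reduced form h = ∑_{i=1}^k x_i 1_{A_i} satisfies A_i ⊆ f^{-1}(V_i) μ-a.e. for the Voronoi cells V_i of {x_1,...,x_k}, and each x_i is a p-th mean of f on A_i (i.e., x_i minimizes y ↦ ∫_{A_i} ‖f(ω)-y‖^p dμ). -/
open MeasureTheory Set Filter Topology ENNReal

/-- Voronoi cell associated to a finite family of points. -/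
def Voronoi {X : Type*} [NormedAddCommGroup X] {k : ℕ} (x : Fin k → X) (i : Fin k) : Set X :=
  {y | ∀ j, j ≠ i → ‖y - x i‖ ≤ ‖y - x j‖}

theorem minimizer_special_voronoi_form
    {Ω X : Type*} [MeasurableSpace Ω] [NormedAddCommGroup X] [NormedSpace ℝ X]
    [CompleteSpace X]
    (μ : Measure Ω) (p : ENNReal) (hp : 1 ≤ p) (hp' : p ≠ ⊤) (k : ℕ) (hk : 1 ≤ k)
    (f : Ω → X) (hf : MemLp f p μ)
    -- f is not (a.e. equal to) an element of G_{p,k}(X)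
    (hfnot : ¬ ∃ s ∈ GSet (X := X) μ p k, f =ᵐ[μ] s)
    (h : Ω → X) (hh : h ∈ GSet μ p k)
    -- h is a minimizer for f in G_{p,k}(X)
    (hmin : eLpNorm (f - h) p μ = ⨅ g ∈ GSet (X := X) μ p k, eLpNorm (f - g) p μ)
    -- reduced form of h
    (m : ℕ) (x : Fin m → X) (hx : Function.Injective x)
    (A : Fin m → Set Ω) (hAmeas : ∀ i, MeasurableSet (A i))
    (hAdisj : Pairwise (Function.onFun Disjoint A)) (hAcov : (⋃ i, A i) = Set.univ)
    (hApos : ∀ i, 0 < μ (A i))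
    (hform : h = fun ω => ∑ i, (A i).indicator (fun _ => x i) ω) :
    -- h has degree exactly k, is in f-Voronoi form, and each xᵢ is a p-th mean on Aᵢ
    m = k ∧
    (∀ i, μ (A i \ f ⁻¹' Voronoi x i) = 0) ∧
    (∀ i, ∀ y : X,
      (∫⁻ ω in A i, (‖f ω - x i‖₊ : ℝ≥0∞) ^ p.toReal ∂μ) ≤
        ∫⁻ ω in A i, (‖f ω - y‖₊ : ℝ≥0∞) ^ p.toReal ∂μ) := by
  classical
  have hp0 : p ≠ 0 := fun e => by simp [e] at hp
  have hq : 0 < p.toReal := ENNReal.toReal_pos hp0 hp'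
  set q := p.toReal with hqdef
  -- value of h on the cells
  have hval : ∀ i, ∀ ω ∈ A i, h ω = x i := by
    intro i ω hω
    rw [hform]
    dsimp only
    rw [Finset.sum_eq_single i]
    · simp [Set.indicator_of_mem hω]
    · intro j _ hj
      have hωj : ω ∉ A j := fun hωj => (hAdisj hj).le_bot ⟨hωj, hω⟩
      simp [Set.indicator_of_notMem hωj]
    · simp
  have htotal : ∀ ω, ∃ i, ω ∈ A i := by
    intro ω
    have : ω ∈ ⋃ i, A i := hAcov ▸ Set.mem_univ ω
    simpa using this
  -- m ≤ k
  have hmk : m ≤ k := by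
    obtain ⟨s, hscard, hsval⟩ := hh.2.2
    have hsub : Finset.image x Finset.univ ⊆ s := by
      intro v hv
      simp only [Finset.mem_image] at hv
      obtain ⟨i, -, rfl⟩ := hv
      obtain ⟨ω, hω⟩ := nonempty_of_measure_ne_zero (hApos i).ne'
      have := hsval ω
      rwa [hval i ω hω] at this
    calc m = (Finset.image x Finset.univ).card := by
            rw [Finset.card_image_of_injective _ hx, Finset.card_univ, Fintype.card_fin]
      _ ≤ s.card := Finset.card_le_card hsub
      _ ≤ k := hscard
  -- decomposition of lintegrals over the partition
  have hdecomp : ∀ φ : Ω → ℝ≥0∞, ∫⁻ ω, φ ω ∂μ = ∑ i, ∫⁻ ω in A i, φ ω ∂μ := by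
    intro φ
    rw [← setLIntegral_univ, ← hAcov, lintegral_iUnion hAmeas hAdisj, tsum_fintype]
  -- minimality, in lintegral form
  have hub : ∀ g ∈ GSet (X := X) μ p k,
      (∫⁻ ω, (‖f ω - h ω‖₊ : ℝ≥0∞) ^ q ∂μ) ≤ ∫⁻ ω, (‖f ω - g ω‖₊ : ℝ≥0∞) ^ q ∂μ := by
    intro g hg
    have h1 : eLpNorm (f - h) p μ ≤ eLpNorm (f - g) p μ := by
      rw [hmin]; exact iInf₂_le g hg
    rw [eLpNorm_eq_lintegral_rpow_enorm_toReal hp0 hp', eLpNorm_eq_lintegral_rpow_enorm_toReal hp0 hp',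
      ENNReal.rpow_le_rpow_iff (by positivity : (0:ℝ) < 1 / q)] at h1
    exact h1
  -- finiteness of the minimal value
  have hfin : (∫⁻ ω, (‖f ω - h ω‖₊ : ℝ≥0∞) ^ q ∂μ) ≠ ∞ := by
    have h2 := (hf.sub hh.1).2
    rw [eLpNorm_eq_lintegral_rpow_enorm_toReal hp0 hp'] at h2
    simp only [Pi.sub_apply] at h2
    change (∫⁻ ω, (‖f ω - h ω‖₊ : ℝ≥0∞) ^ q ∂μ) ^ (1 / q) < ∞ at h2
    intro hcon
    rw [hcon, ENNReal.top_rpow_of_pos (by positivity)] at h2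
    exact absurd h2 (lt_irrefl _)
  have hmeasFH : AEMeasurable (fun ω => (‖f ω - h ω‖₊ : ℝ≥0∞) ^ q) μ :=
    ((hf.1.sub hh.2.1.aestronglyMeasurable).enorm).pow_const q
  -- generic strict-improvement contradiction
  have improve : ∀ (C : Set Ω) (z : X), MeasurableSet C → μ C ≠ 0 →
      (∀ᵐ ω ∂μ, ω ∈ C → ‖f ω - z‖ < ‖f ω - h ω‖) →
      (∃ t : Finset X, t.card ≤ k ∧ ∀ ω, (if ω ∈ C then z else h ω) ∈ t) → False := by
    rintro C z hCmeas hC0 hlt ⟨t, htcard, htval⟩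
    set g : Ω → X := fun ω => if ω ∈ C then z else h ω with hgdef
    have hgsm : StronglyMeasurable g :=
      StronglyMeasurable.ite hCmeas stronglyMeasurable_const hh.2.1
    have hle : ∀ᵐ ω ∂μ, (‖f ω - g ω‖₊ : ℝ≥0∞) ^ q ≤ (‖f ω - h ω‖₊ : ℝ≥0∞) ^ q := by
      filter_upwards [hlt] with ω hω
      by_cases hc : ω ∈ C
      · refine ENNReal.rpow_le_rpow ?_ hq.le
        have : ‖f ω - g ω‖ ≤ ‖f ω - h ω‖ := by
          simp only [hgdef, if_pos hc]
          exact (hω hc).le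
        exact_mod_cast this
      · simp [hgdef, hc]
    have hstrict : (∫⁻ ω, (‖f ω - g ω‖₊ : ℝ≥0∞) ^ q ∂μ)
        < ∫⁻ ω, (‖f ω - h ω‖₊ : ℝ≥0∞) ^ q ∂μ := by
      refine lintegral_strict_mono_of_ae_le_of_ae_lt_on hmeasFH
        (ne_top_of_le_ne_top hfin (lintegral_mono_ae hle)) hle hC0 ?_
      filter_upwards [hlt] with ω hω hc
      refine ENNReal.rpow_lt_rpow ?_ hq
      have : ‖f ω - g ω‖ < ‖f ω - h ω‖ := by
        simp only [hgdef, if_pos hc]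
        exact hω hc
      exact_mod_cast this
    have hfg : MemLp (f - g) p μ := by
      refine ⟨hf.1.sub hgsm.aestronglyMeasurable, ?_⟩
      rw [eLpNorm_eq_lintegral_rpow_enorm_toReal hp0 hp']
      refine ENNReal.rpow_lt_top_of_nonneg (by positivity) ?_
      simp only [Pi.sub_apply]
      exact ne_top_of_le_ne_top hfin (lintegral_mono_ae hle)
    have hgmem : MemLp g p μ := by
      have h3 := hf.sub hfg
      rwa [_root_.sub_sub_cancel] at h3
    exact absurd (hub g ⟨hgmem, hgsm, t, htcard, htval⟩) (not_le.mpr hstrict)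
  -- a measurable representative of f
  obtain ⟨f', hf'm, hff'⟩ : ∃ f', StronglyMeasurable f' ∧ f =ᵐ[μ] f' :=
    ⟨hf.1.mk f, hf.1.stronglyMeasurable_mk, hf.1.ae_eq_mk⟩
  have hnormmeas : ∀ c : X, Measurable (fun ω => ‖f' ω - c‖) := fun c =>
    ((hf'm.sub stronglyMeasurable_const).norm).measurable
  -- membership finset for modifications inside the range of x
  have hximg : ∀ (C : Set Ω) (j : Fin m), ∀ ω,
      (if ω ∈ C then x j else h ω) ∈ Finset.image x Finset.univ := by
    intro C j ω
    by_cases hc : ω ∈ C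
    · simp [hc]
    · obtain ⟨i', hi'⟩ := htotal ω
      simp only [if_neg hc]
      exact Finset.mem_image.mpr ⟨i', Finset.mem_univ _, (hval i' ω hi').symm⟩
  -- Claim 2 : Voronoi property
  have claim2 : ∀ i, μ (A i \ f ⁻¹' Voronoi x i) = 0 := by
    intro i
    have hBzero : ∀ j, μ (A i ∩ {ω | ‖f' ω - x j‖ < ‖f' ω - x i‖}) = 0 := by
      intro j
      by_contra hB0
      refine improve (A i ∩ {ω | ‖f' ω - x j‖ < ‖f' ω - x i‖}) (x j)
        ((hAmeas i).inter (measurableSet_lt (hnormmeas (x j)) (hnormmeas (x i)))) hB0 ?_ ?_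
      · filter_upwards [hff'] with ω hω hc
        rw [hval i ω hc.1, hω]
        exact hc.2
      · refine ⟨Finset.image x Finset.univ, ?_, hximg _ j⟩
        rw [Finset.card_image_of_injective _ hx, Finset.card_univ, Fintype.card_fin]
        exact hmk
    have hsub2 : A i \ f ⁻¹' Voronoi x i ⊆
        {ω | f ω ≠ f' ω} ∪ ⋃ j, (A i ∩ {ω | ‖f' ω - x j‖ < ‖f' ω - x i‖}) := by
      rintro ω ⟨hA, hV⟩
      by_cases hωf : f ω = f' ω
      · right
        simp only [Set.mem_preimage, Voronoi, Set.mem_setOf_eq] at hV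
        push_neg at hV
        obtain ⟨j, hji, hj⟩ := hV
        exact Set.mem_iUnion.mpr ⟨j, hA, by rw [Set.mem_setOf_eq, ← hωf]; exact hj⟩
      · left; exact hωf
    refine measure_mono_null hsub2 (measure_union_null ?_ ?_)
    · exact ae_iff.mp hff'
    · exact measure_iUnion_null_iff.mpr hBzero
  -- Claim 3 : p-th mean property
  have claim3 : ∀ i, ∀ y : X,
      (∫⁻ ω in A i, (‖f ω - x i‖₊ : ℝ≥0∞) ^ q ∂μ) ≤
        ∫⁻ ω in A i, (‖f ω - y‖₊ : ℝ≥0∞) ^ q ∂μ := by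
    intro i y
    by_cases hinf : (∫⁻ ω in A i, (‖f ω - y‖₊ : ℝ≥0∞) ^ q ∂μ) = ∞
    · rw [hinf]; exact le_top
    set gy : Ω → X := fun ω => if ω ∈ A i then y else h ω with hgy
    have hgysm : StronglyMeasurable gy :=
      StronglyMeasurable.ite (hAmeas i) stronglyMeasurable_const hh.2.1
    have hΦh : (∫⁻ ω, (‖f ω - h ω‖₊ : ℝ≥0∞) ^ q ∂μ)
        = ∑ j, ∫⁻ ω in A j, (‖f ω - x j‖₊ : ℝ≥0∞) ^ q ∂μ := by
      rw [hdecomp]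
      exact Finset.sum_congr rfl fun j _ => setLIntegral_congr_fun (hAmeas j)
        (fun ω hω => by rw [hval j ω hω])
    have hΦg : (∫⁻ ω, (‖f ω - gy ω‖₊ : ℝ≥0∞) ^ q ∂μ)
        = ∑ j, ∫⁻ ω in A j, (‖f ω - (if j = i then y else x j)‖₊ : ℝ≥0∞) ^ q ∂μ := by
      rw [hdecomp]
      refine Finset.sum_congr rfl fun j _ => setLIntegral_congr_fun (hAmeas j)
        (fun ω hω => ?_)
      by_cases hji : j = i
      · subst hji; simp [hgy, hω]
      · have hωi : ω ∉ A i := fun hc => (hAdisj hji).le_bot ⟨hω, hc⟩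
        simp [hgy, hωi, hval j ω hω, hji]
    have hTle : ∀ j, (∫⁻ ω in A j, (‖f ω - x j‖₊ : ℝ≥0∞) ^ q ∂μ)
        ≤ ∫⁻ ω, (‖f ω - h ω‖₊ : ℝ≥0∞) ^ q ∂μ := by
      intro j
      rw [hΦh]
      exact Finset.single_le_sum (f := fun j => ∫⁻ ω in A j, (‖f ω - x j‖₊ : ℝ≥0∞) ^ q ∂μ)
        (fun _ _ => zero_le) (Finset.mem_univ j)
    have hΦgfin : (∫⁻ ω, (‖f ω - gy ω‖₊ : ℝ≥0∞) ^ q ∂μ) ≠ ∞ := by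
      rw [hΦg]
      refine (ENNReal.sum_lt_top.mpr fun j _ => ?_).ne
      by_cases hji : j = i
      · rw [if_pos hji, hji]
        exact lt_top_iff_ne_top.mpr hinf
      · rw [if_neg hji]
        exact lt_of_le_of_lt (hTle j) hfin.lt_top
    have hfgy : MemLp (f - gy) p μ := by
      refine ⟨hf.1.sub hgysm.aestronglyMeasurable, ?_⟩
      rw [eLpNorm_eq_lintegral_rpow_enorm_toReal hp0 hp']
      refine ENNReal.rpow_lt_top_of_nonneg (by positivity) ?_
      exact hΦgfin
    have hgymem : MemLp gy p μ := by
      have h3 := hf.sub hfgy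
      rwa [_root_.sub_sub_cancel] at h3
    have hgyG : gy ∈ GSet (X := X) μ p k := by
      refine ⟨hgymem, hgysm, insert y (Finset.image x (Finset.univ.erase i)), ?_, ?_⟩
      · calc (insert y (Finset.image x (Finset.univ.erase i))).card
            ≤ (Finset.image x (Finset.univ.erase i)).card + 1 := Finset.card_insert_le _ _
          _ ≤ (Finset.univ.erase i).card + 1 := by
              exact Nat.add_le_add_right (Finset.card_image_le) 1
          _ = m := by
              have hm1 : 0 < m := i.pos
              rw [Finset.card_erase_of_mem (Finset.mem_univ i), Finset.card_univ,
                Fintype.card_fin]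
              omega
          _ ≤ k := hmk
      · intro ω
        by_cases hc : ω ∈ A i
        · simp [hgy, hc]
        · obtain ⟨j, hj⟩ := htotal ω
          have hji : j ≠ i := fun e => hc (e ▸ hj)
          simp only [hgy, if_neg hc]
          refine Finset.mem_insert_of_mem (Finset.mem_image.mpr
            ⟨j, Finset.mem_erase.mpr ⟨hji, Finset.mem_univ _⟩, (hval j ω hj).symm⟩)
    have hle := hub gy hgyG
    rw [hΦh, hΦg, ← Finset.add_sum_erase _ _ (Finset.mem_univ i),
      ← Finset.add_sum_erase _ _ (Finset.mem_univ i)] at hle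
    have hsumeq : (∑ j ∈ Finset.univ.erase i,
          ∫⁻ ω in A j, (‖f ω - (if j = i then y else x j)‖₊ : ℝ≥0∞) ^ q ∂μ)
        = ∑ j ∈ Finset.univ.erase i, ∫⁻ ω in A j, (‖f ω - x j‖₊ : ℝ≥0∞) ^ q ∂μ :=
      Finset.sum_congr rfl fun j hj => by rw [if_neg (Finset.ne_of_mem_erase hj)]
    rw [hsumeq, if_pos rfl] at hle
    have hSfin : (∑ j ∈ Finset.univ.erase i,
        ∫⁻ ω in A j, (‖f ω - x j‖₊ : ℝ≥0∞) ^ q ∂μ) ≠ ∞ := by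
      refine ne_top_of_le_ne_top hfin ?_
      rw [hΦh]
      exact Finset.sum_le_sum_of_subset (Finset.subset_univ _)
    exact (ENNReal.add_le_add_iff_right hSfin).mp hle
  -- Claim 1 : m = k
  have claim1 : m = k := by
    refine le_antisymm hmk ?_
    by_contra hlt'
    have hmk' : m < k := not_le.mp hlt'
    have hne : ¬ f =ᵐ[μ] h := fun hc => hfnot ⟨h, hh, hc⟩
    have hE : μ {ω | f' ω ≠ h ω} ≠ 0 := by
      intro h0
      apply hne
      exact hff'.trans (by rwa [Filter.EventuallyEq, ae_iff])
    obtain ⟨i, hi⟩ : ∃ i, μ ({ω | f' ω ≠ h ω} ∩ A i) ≠ 0 := by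
      by_contra hc; push_neg at hc
      apply hE
      have heq : {ω | f' ω ≠ h ω} = ⋃ i, ({ω | f' ω ≠ h ω} ∩ A i) := by
        rw [← Set.inter_iUnion, hAcov, Set.inter_univ]
      rw [heq]
      exact measure_iUnion_null_iff.mpr hc
    have hsubD : ({ω | f' ω ≠ h ω} ∩ A i) ⊆
        ⋃ n : ℕ, (A i ∩ {ω | ((n : ℝ) + 1)⁻¹ ≤ ‖f' ω - x i‖}) := by
      rintro ω ⟨hne', hA⟩
      have hpos : 0 < ‖f' ω - x i‖ := by
        rw [norm_pos_iff, sub_ne_zero]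
        rw [Set.mem_setOf_eq, hval i ω hA] at hne'
        exact hne'
      obtain ⟨n, hn⟩ := exists_nat_one_div_lt hpos
      rw [one_div] at hn
      exact Set.mem_iUnion.mpr ⟨n, hA, hn.le⟩
    obtain ⟨n, hn⟩ : ∃ n : ℕ, μ (A i ∩ {ω | ((n : ℝ) + 1)⁻¹ ≤ ‖f' ω - x i‖}) ≠ 0 := by
      by_contra hc; push_neg at hc
      exact hi (measure_mono_null hsubD (measure_iUnion_null_iff.mpr hc))
    set ε : ℝ := ((n : ℝ) + 1)⁻¹ with hε
    have hεpos : 0 < ε := by positivity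
    set D := A i ∩ {ω | ε ≤ ‖f' ω - x i‖} with hD
    obtain ⟨c, hcct, hcsub⟩ := hf'm.isSeparable_range
    have hDsub : D ⊆ ⋃ z ∈ c, (D ∩ {ω | ‖f' ω - z‖ < ε/3}) := by
      intro ω hω
      have hcl : f' ω ∈ closure c := hcsub (Set.mem_range_self ω)
      obtain ⟨z, hz, hdz⟩ := Metric.mem_closure_iff.mp hcl (ε/3) (by positivity)
      exact Set.mem_biUnion hz ⟨hω, by rw [Set.mem_setOf_eq, ← dist_eq_norm]; exact hdz⟩
    obtain ⟨z, hz, hC0⟩ : ∃ z ∈ c, μ (D ∩ {ω | ‖f' ω - z‖ < ε/3}) ≠ 0 := by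
      by_contra hc2; push_neg at hc2
      refine hn (measure_mono_null hDsub ?_)
      exact (measure_biUnion_null_iff hcct).mpr hc2
    set C := D ∩ {ω | ‖f' ω - z‖ < ε/3} with hC
    have hCmeas : MeasurableSet C := by
      refine (((hAmeas i).inter ?_).inter ?_)
      · exact measurableSet_le measurable_const (hnormmeas (x i))
      · exact measurableSet_lt (hnormmeas z) measurable_const
    refine improve C z hCmeas hC0 ?_ ⟨insert z (Finset.image x Finset.univ), ?_, ?_⟩
    · filter_upwards [hff'] with ω hω hc
      have hA : ω ∈ A i := hc.1.1
      rw [hval i ω hA, hω]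
      calc ‖f' ω - z‖ < ε/3 := hc.2
        _ < ε := by linarith
        _ ≤ ‖f' ω - x i‖ := hc.1.2
    · calc (insert z (Finset.image x Finset.univ)).card
          ≤ (Finset.image x Finset.univ).card + 1 := Finset.card_insert_le _ _
        _ = m + 1 := by
            rw [Finset.card_image_of_injective _ hx, Finset.card_univ, Fintype.card_fin]
        _ ≤ k := hmk'
    · intro ω
      by_cases hc : ω ∈ C
      · simp [hc]
      · obtain ⟨j, hj⟩ := htotal ω
        simp only [if_neg hc]
        exact Finset.mem_insert_of_mem
          (Finset.mem_image.mpr ⟨j, Finset.mem_univ _, (hval j ω hj).symm⟩)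
  exact ⟨claim1, claim2, claim3⟩
end
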